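/- arXiv:1804.02578 — 9 statements merged into one kernel-verified Lean document; each statement's English description precedes it below -/
import Mathlib

section
/- Every cyclic permutation of {1,2,...,n} with n = (k-1)(ℓ-1)+2, for k,ℓ ≥ 1, contains either an increasing cyclic sub-permutation of length k+1 or a decreasing cyclic sub-permutation of length ℓ+1. -/
/-- The cyclic permutation represented by list `c` has an increasing cyclic
sub-permutation of length `m`: some rotation of `c` has a strictly increasing
sublist of length `m`. -/
def IncCycSub (c : List ℕ) (m : ℕ) : Prop :=
  ∃ (r : ℕ) (s : List ℕ), s.Sublist (c.rotate r) ∧ s.length = m ∧ s.Pairwise (· < ·)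

/-- Decreasing cyclic sub-permutation of length `m`. -/
def DecCycSub (c : List ℕ) (m : ℕ) : Prop :=
  ∃ (r : ℕ) (s : List ℕ), s.Sublist (c.rotate r) ∧ s.length = m ∧ s.Pairwise (· > ·)

namespace CyclicES

open Function Finset

variable {α : Type*} [LinearOrder α]

/-- Erdős–Szekeres (copied from the Mathlib Archive, which is not importable). -/
theorem erdos_szekeres {r s n : ℕ} {f : Fin n → α} (hn : r * s < n) (hf : Injective f) :
    (∃ t : Finset (Fin n), r < t.card ∧ StrictMonoOn f ↑t) ∨
      ∃ t : Finset (Fin n), s < t.card ∧ StrictAntiOn f ↑t := by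
  let inc_sequences_ending_in : Fin n → Finset (Finset (Fin n)) := fun i =>
    univ.powerset.filter fun t => Finset.max t = i ∧ StrictMonoOn f ↑t
  let dec_sequences_ending_in : Fin n → Finset (Finset (Fin n)) := fun i =>
    univ.powerset.filter fun t => Finset.max t = i ∧ StrictAntiOn f ↑t
  have inc_i : ∀ i, {i} ∈ inc_sequences_ending_in i := fun i => by
    simp [inc_sequences_ending_in, StrictMonoOn]
  have dec_i : ∀ i, {i} ∈ dec_sequences_ending_in i := fun i => by
    simp [dec_sequences_ending_in, StrictAntiOn]
  let ab' : Fin n → ℕ × ℕ := by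
    intro i
    apply
      (max' ((inc_sequences_ending_in i).image card) (Nonempty.image ⟨{i}, inc_i i⟩ _),
        max' ((dec_sequences_ending_in i).image card) (Nonempty.image ⟨{i}, dec_i i⟩ _))
  generalize hab : ab' = ab
  rsuffices ⟨i, hi⟩ : ∃ i, r < (ab i).1 ∨ s < (ab i).2
  · refine Or.imp ?_ ?_ hi
    on_goal 1 =>
      have : (ab i).1 ∈ image card (inc_sequences_ending_in i) := by
        simp only [← hab]; exact max'_mem _ (Nonempty.image ⟨{i}, inc_i i⟩ _)
    on_goal 2 =>
      have : (ab i).2 ∈ image card (dec_sequences_ending_in i) := by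
        simp only [← hab]; exact max'_mem _ (Nonempty.image ⟨{i}, dec_i i⟩ _)
    all_goals
      intro hi
      rw [mem_image] at this
      obtain ⟨t, ht₁, ht₂⟩ := this
      refine ⟨t, by rwa [ht₂], ?_⟩
      rw [mem_filter] at ht₁
      apply ht₁.2.2
  have : Injective ab := by
    simp only [← hab]
    apply Injective.of_lt_imp_ne
    intro i j k q
    injection q with q₁ q₂
    cases lt_or_gt_of_ne fun _ => ne_of_lt ‹i < j› (hf ‹f i = f j›)
    on_goal 1 =>
      apply ne_of_lt _ q₁
      have : (ab' i).1 ∈ image card (inc_sequences_ending_in i) := by exact max'_mem _ (Nonempty.image ⟨{i}, inc_i i⟩ _)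
    on_goal 2 =>
      apply ne_of_lt _ q₂
      have : (ab' i).2 ∈ image card (dec_sequences_ending_in i) := by exact max'_mem _ (Nonempty.image ⟨{i}, dec_i i⟩ _)
    all_goals
      rw [Nat.lt_iff_add_one_le]
      apply le_max'
      rw [mem_image] at this ⊢
      rcases this with ⟨t, ht₁, ht₂⟩
      rw [mem_filter] at ht₁
      have : t.max = i := by simp only [ht₁.2.1]
      refine ⟨insert j t, ?_, ?_⟩
      · rw [mem_filter]
        refine ⟨?_, ?_, ?_⟩
        · rw [mem_powerset]; apply subset_univ
        · convert max_insert (a := j) (s := t)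
          rw [ht₁.2.1, max_eq_left]
          apply WithBot.coe_le_coe.mpr (le_of_lt ‹i < j›)
        simp only [StrictMonoOn, StrictAntiOn, coe_insert, Set.mem_insert_iff, mem_coe]
        rintro x ⟨rfl | _⟩ y ⟨rfl | _⟩ _
        · apply (irrefl _ ‹j < j›).elim
        · exfalso
          apply not_le_of_gt (_root_.trans ‹i < j› ‹j < y›) (le_max_of_eq ‹y ∈ t› ‹t.max = i›)
        · first
          | apply lt_of_le_of_lt _ ‹f i < f j›
          | apply lt_of_lt_of_le ‹f j < f i› _
          rcases lt_or_eq_of_le (le_max_of_eq ‹x ∈ t› ‹t.max = i›) with (_ | rfl)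
          · apply le_of_lt (ht₁.2.2 ‹x ∈ t› (mem_of_max ‹t.max = i›) ‹x < i›)
          · rfl
        · apply ht₁.2.2 ‹x ∈ t› ‹y ∈ t› ‹x < y›
      · rw [card_insert_of_notMem, ht₂]
        intro
        apply not_le_of_gt ‹i < j› (le_max_of_eq ‹j ∈ t› ‹t.max = i›)
  by_contra! q
  let ran : Finset (ℕ × ℕ) := (range r).image Nat.succ ×ˢ (range s).image Nat.succ
  have : image ab univ ⊆ ran := by
    rintro ⟨x₁, x₂⟩
    simp only [ran, mem_image, exists_prop, mem_range, mem_univ, mem_product, true_and,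
      Prod.ext_iff]
    rintro ⟨i, rfl, rfl⟩
    specialize q i
    have z : 1 ≤ (ab i).1 ∧ 1 ≤ (ab i).2 := by
      simp only [← hab]
      constructor <;>
        · apply le_max'
          rw [mem_image]
          exact ⟨{i}, by solve_by_elim, card_singleton i⟩
    exact ⟨⟨(ab i).1 - 1, by omega⟩, (ab i).2 - 1, by omega⟩
  apply not_le_of_gt hn
  simpa [ran, Nat.succ_injective, card_image_of_injective, ‹Injective ab›] using card_le_card this

/-- A sorted list of in-bounds indices, mapped through `getD`, is a sublist. -/
theorem map_getD_sublist {β : Type*} (d : β) :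
    ∀ (t : List β) (is : List ℕ), is.Pairwise (· < ·) → (∀ i ∈ is, i < t.length) →
      (is.map fun i => t.getD i d).Sublist t := by
  intro t
  induction t with
  | nil =>
    intro is _ hbd
    cases is with
    | nil => simp
    | cons i is => exact absurd (hbd i (by simp)) (by simp)
  | cons a t ih =>
    intro is hpw hbd
    cases is with
    | nil => simp
    | cons i is =>
      rcases Nat.eq_zero_or_pos i with rfl | hi
      · have hpos : ∀ j ∈ is, 1 ≤ j := fun j hj => (List.rel_of_pairwise_cons hpw hj)
        have : (is.map fun j => (a :: t).getD j d) = ((is.map (· - 1)).map fun j => t.getD j d) := by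
          rw [List.map_map]
          apply List.map_congr_left
          intro j hj
          have : 1 ≤ j := hpos j hj
          simp only [comp]
          rw [show j = (j - 1) + 1 by omega]
          simp
        simp only [List.map_cons, List.getD_cons_zero, this]
        refine List.Sublist.cons₂ a (ih _ ?_ ?_)
        · rw [List.pairwise_map]
          exact (List.pairwise_cons.mp hpw).2.imp_of_mem fun ha hb hab => by
            have := hpos _ ha; omega
        · intro j hj
          rw [List.mem_map] at hj
          obtain ⟨j', hj', rfl⟩ := hj
          have h1 := hpos j' hj'
          have h2 := hbd j' (by simp [hj'])
          simp at h2; omega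
      · have hpos : ∀ j ∈ i :: is, 1 ≤ j := by
          intro j hj
          rcases List.mem_cons.mp hj with rfl | hj
          · exact hi
          · exact le_trans hi (le_of_lt (List.rel_of_pairwise_cons hpw hj))
        have : ((i :: is).map fun j => (a :: t).getD j d) =
            (((i :: is).map (· - 1)).map fun j => t.getD j d) := by
          rw [List.map_map]
          apply List.map_congr_left
          intro j hj
          have : 1 ≤ j := hpos j hj
          simp only [comp]
          rw [show j = (j - 1) + 1 by omega]
          simp
        rw [this]
        refine List.Sublist.cons a (ih _ ?_ ?_)
        · rw [List.pairwise_map]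
          exact hpw.imp_of_mem fun ha hb hab => by have := hpos _ ha; omega
        · intro j hj
          rw [List.mem_map] at hj
          obtain ⟨j', hj', rfl⟩ := hj
          have h1 := hpos j' hj'
          have h2 := hbd j' hj'
          simp at h2; omega

/-- From a finset of indices on which `t.get` respects `R` (w.r.t. index order),
extract a sublist of `t` of the same length that is `Pairwise R`. -/
theorem exists_pairwise_sublist (t : List ℕ) (A : Finset (Fin t.length)) (R : ℕ → ℕ → Prop)
    (hR : ∀ a b : Fin t.length, a ∈ A → b ∈ A → a < b → R (t.get a) (t.get b)) :
    ∃ s : List ℕ, s.Sublist t ∧ s.length = A.card ∧ s.Pairwise R := by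
  classical
  set is0 : List (Fin t.length) := A.sort (· ≤ ·) with his0
  have hsorted : is0.Pairwise (· < ·) := A.sortedLT_sort.pairwise
  have hmem : ∀ a ∈ is0, a ∈ A := fun a ha => (Finset.mem_sort _).mp ha
  refine ⟨is0.map t.get, ?_, ?_, ?_⟩
  · have heq : is0.map t.get = (is0.map Fin.val).map fun i => t.getD i 0 := by
      rw [List.map_map]
      apply List.map_congr_left
      intro a _
      simp [comp, List.getD_eq_getElem t 0 a.isLt]
    rw [heq]
    apply map_getD_sublist
    · rw [List.pairwise_map]
      exact hsorted.imp fun h => h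
    · intro i hi
      rw [List.mem_map] at hi
      obtain ⟨a, _, rfl⟩ := hi
      exact a.isLt
  · rw [List.length_map, his0, Finset.length_sort]
  · rw [List.pairwise_map]
    exact hsorted.imp_of_mem fun ha hb hab => hR _ _ (hmem _ ha) (hmem _ hb) hab

end CyclicES

theorem cyclic_erdos_szekeres (k ℓ : ℕ) (hk : 1 ≤ k) (hl : 1 ≤ ℓ) (c : List ℕ)
    (hc : c.Perm (List.range' 1 ((k-1)*(ℓ-1)+2))) :
    IncCycSub c (k+1) ∨ DecCycSub c (ℓ+1) := by
  classical
  set n := (k-1)*(ℓ-1)+2 with hn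
  have hclen : c.length = n := by rw [hc.length_eq, List.length_range']
  have hcnd : c.Nodup := hc.nodup_iff.mpr (List.nodup_range' ..)
  have h1c : (1 : ℕ) ∈ c := hc.mem_iff.mpr (by
    rw [List.mem_range'_1]; omega)
  obtain ⟨l1, l2, rfl⟩ := List.append_of_mem h1c
  set r := l1.length with hr
  have hrot : (l1 ++ 1 :: l2).rotate r = 1 :: (l2 ++ l1) := by
    rw [List.rotate_eq_drop_append_take (by rw [hr, List.length_append]; simp)]
    rw [hr, List.drop_left, List.take_left]
    simp
  set t := l2 ++ l1 with hteq
  have htlen : t.length = (k-1)*(ℓ-1) + 1 := by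
    have := hclen
    rw [List.length_append, List.length_cons] at this
    rw [hteq, List.length_append]
    omega
  have htnd : (1 :: t).Nodup := by
    rw [← hrot]
    exact ((l1 ++ 1 :: l2).rotate_perm r).nodup_iff.mpr hcnd
  have h1t : (1 : ℕ) ∉ t := (List.nodup_cons.mp htnd).1
  have htnd' : t.Nodup := (List.nodup_cons.mp htnd).2
  have htmem : ∀ x ∈ t, 1 < x := by
    intro x hx
    have hxc : x ∈ l1 ++ 1 :: l2 := by
      have : x ∈ (l1 ++ 1 :: l2).rotate r := by rw [hrot]; exact List.mem_cons_of_mem _ hx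
      exact (List.mem_rotate).mp this
    have := hc.subset hxc
    rw [List.mem_range'_1] at this
    have : 1 ≤ x := this.1
    have hne : x ≠ 1 := fun h => h1t (h ▸ hx)
    omega
  have hinj : Function.Injective t.get := List.nodup_iff_injective_get.mp htnd'
  have hlt : (k-1) * (ℓ-1) < t.length := by omega
  rcases CyclicES.erdos_szekeres hlt hinj with ⟨A, hAcard, hA⟩ | ⟨A, hAcard, hA⟩
  · -- increasing case
    obtain ⟨B, hBA, hBcard⟩ := Finset.exists_subset_card_eq (show k ≤ A.card by omega)
    obtain ⟨s, hsub, hslen, hspw⟩ := CyclicES.exists_pairwise_sublist t B (· < ·)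
      (fun a b ha hb hab => hA (hBA ha) (hBA hb) hab)
    refine Or.inl ⟨r, 1 :: s, ?_, ?_, ?_⟩
    · rw [hrot]; exact hsub.cons₂ 1
    · simp [hslen, hBcard]
    · refine List.pairwise_cons.mpr ⟨fun x hx => htmem x (hsub.subset hx), hspw⟩
  · -- decreasing case
    obtain ⟨B, hBA, hBcard⟩ := Finset.exists_subset_card_eq (show ℓ ≤ A.card by omega)
    obtain ⟨s, hsub, hslen, hspw⟩ := CyclicES.exists_pairwise_sublist t B (· > ·)
      (fun a b ha hb hab => hA (hBA ha) (hBA hb) hab)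
    have hrot2 : (l1 ++ 1 :: l2).rotate (r + 1) = t ++ [1] := by
      rw [← List.rotate_rotate, hrot, List.rotate_cons_succ, List.rotate_zero]
    refine Or.inr ⟨r + 1, s ++ [1], ?_, ?_, ?_⟩
    · rw [hrot2]; exact hsub.append (List.Sublist.refl [1])
    · simp [hslen, hBcard]
    · rw [List.pairwise_append]
      exact ⟨hspw, List.pairwise_singleton _ _,
        fun x hx y hy => by simp at hy; subst hy; exact htmem x (hsub.subset hx)⟩
end

section
/- For k,ℓ ≥ 2, the cyclic permutation π = (1, a_1, ..., a_{(k-1)(ℓ-1)}) of {1,...,(k-1)(ℓ-1)+1}, where a_{(j-1)(ℓ-1)+i} = (ℓ-1-i)(k-1)+j+1 for all i ∈ [ℓ-1], j ∈ [k-1], has no increasing cyclic sub-permutation of length k+1 and no decreasing cyclic sub-permutation of length ℓ+1. -/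
private lemma baseK {a b c d K : ℕ} (hb : b < K) (hd : d < K) :
    a * K + b < c * K + d ↔ a < c ∨ (a = c ∧ b < d) := by
  constructor
  · intro h
    rcases Nat.lt_trichotomy a c with h1 | h1 | h1
    · exact Or.inl h1
    · subst h1; exact Or.inr ⟨rfl, by omega⟩
    · exfalso
      have h2 : (c+1) * K ≤ a * K := Nat.mul_le_mul_right _ h1
      rw [add_mul, one_mul] at h2
      omega
  · rintro (h1 | ⟨rfl, h1⟩)
    · have h2 : (a+1) * K ≤ c * K := Nat.mul_le_mul_right _ h1
      rw [add_mul, one_mul] at h2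
      omega
    · omega

private lemma f_lt_iff {K Lm p q : ℕ} (hK : 0 < K) (hLm : 0 < Lm)
    (hp : p < K * Lm) (hq : q < K * Lm) :
    (Lm - 1 - p % Lm) * K + p / Lm + 2 < (Lm - 1 - q % Lm) * K + q / Lm + 2 ↔
      q % Lm < p % Lm ∨ (p % Lm = q % Lm ∧ p / Lm < q / Lm) := by
  have hpm : p % Lm < Lm := Nat.mod_lt _ hLm
  have hqm : q % Lm < Lm := Nat.mod_lt _ hLm
  have hpd : p / Lm < K := Nat.div_lt_of_lt_mul (by rwa [Nat.mul_comm] at hp)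
  have hqd : q / Lm < K := Nat.div_lt_of_lt_mul (by rwa [Nat.mul_comm] at hq)
  rw [Nat.add_lt_add_iff_right, baseK hpd hqd]
  omega

private lemma mod_lt_of_div_eq {Lm p q : ℕ} (h : p < q) (hd : p / Lm = q / Lm) :
    p % Lm < q % Lm := by
  have e1 := Nat.div_add_mod p Lm
  have e2 := Nat.div_add_mod q Lm
  rw [hd] at e1
  omega

/-- strict increase of the block index along an increasing pair. -/
private lemma inc_step {K Lm p q : ℕ} (hK : 0 < K) (hLm : 0 < Lm)
    (hq : q < K * Lm) (hpq : p < q)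
    (hlt : (Lm - 1 - p % Lm) * K + p / Lm + 2 < (Lm - 1 - q % Lm) * K + q / Lm + 2) :
    p / Lm < q / Lm := by
  have hp : p < K * Lm := lt_trans hpq hq
  rw [f_lt_iff hK hLm hp hq] at hlt
  have hle : p / Lm ≤ q / Lm := Nat.div_le_div_right hpq.le
  rcases Nat.eq_or_lt_of_le hle with he | h
  · have := mod_lt_of_div_eq hpq he
    omega
  · exact h

/-- strict increase of the level along a decreasing pair (same side). -/
private lemma dec_step {K Lm p q : ℕ} (hK : 0 < K) (hLm : 0 < Lm)
    (hq : q < K * Lm) (hpq : p < q)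
    (hgt : (Lm - 1 - q % Lm) * K + q / Lm + 2 < (Lm - 1 - p % Lm) * K + p / Lm + 2) :
    p % Lm < q % Lm := by
  have hp : p < K * Lm := lt_trans hpq hq
  rw [f_lt_iff hK hLm hq hp] at hgt
  have hle : p / Lm ≤ q / Lm := Nat.div_le_div_right hpq.le
  rcases hgt with h | ⟨he, h⟩
  · exact h
  · omega

/-- weak increase of the level along a decreasing pair (cross). -/
private lemma cross_dec {K Lm p q : ℕ} (hK : 0 < K) (hLm : 0 < Lm)
    (hp : p < K * Lm) (hq : q < K * Lm)
    (hgt : (Lm - 1 - q % Lm) * K + q / Lm + 2 < (Lm - 1 - p % Lm) * K + p / Lm + 2) :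
    p % Lm ≤ q % Lm := by
  rw [f_lt_iff hK hLm hq hp] at hgt
  omega

private lemma chain_bound {L s : List ℕ} {P : ℕ → ℕ → Prop} (φ : ℕ → ℕ) {lo m : ℕ}
    (hs : s.Sublist L) (hp : s.Pairwise P)
    (hL : L.Pairwise fun x y => P x y → φ x < φ y)
    (hlo : ∀ x ∈ L, lo ≤ φ x) (hhi : ∀ x ∈ L, φ x < m) :
    s.length ≤ m - lo := by
  have h1 : s.Pairwise fun x y => φ x < φ y :=
    ((hL.sublist hs).and hp).imp (fun h => h.1 h.2)
  have h2 : (s.map φ).Pairwise (· < ·) := List.pairwise_map.2 h1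
  have hnd : (s.map φ).Nodup := h2.imp (fun h => Nat.ne_of_lt h)
  have hsub : (s.map φ).toFinset ⊆ Finset.Ico lo m := by
    intro x hx
    rw [List.mem_toFinset, List.mem_map] at hx
    obtain ⟨y, hy, rfl⟩ := hx
    have hyL := hs.subset hy
    exact Finset.mem_Ico.2 ⟨hlo _ hyL, hhi _ hyL⟩
  calc s.length = (s.map φ).length := (List.length_map _).symm
    _ = (s.map φ).toFinset.card := (List.toFinset_card_of_nodup hnd).symm
    _ ≤ (Finset.Ico lo m).card := Finset.card_le_card hsub
    _ = m - lo := Nat.card_Ico lo m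

private lemma pairwise_map_range' {f : ℕ → ℕ} {R : ℕ → ℕ → Prop} {t n : ℕ}
    (h : ∀ p q, t ≤ p → p < q → q < t + n → R (f p) (f q)) :
    (List.map f (List.range' t n)).Pairwise R := by
  rw [List.pairwise_map, List.pairwise_iff_getElem]
  intro i j hi hj hij
  simp only [List.length_range'] at hi hj
  simp only [List.getElem_range']
  exact h _ _ (by omega) (by omega) (by omega)

theorem extremal_structure_one (k ℓ : ℕ) (hk : 2 ≤ k) (hl : 2 ≤ ℓ) (a : List ℕ)
    (ha : a.length = (k-1)*(ℓ-1))
    (hperm : (1 :: a).Perm (List.range' 1 ((k-1)*(ℓ-1)+1)))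
    (hform : ∀ i ∈ Finset.Icc 1 (ℓ-1), ∀ j ∈ Finset.Icc 1 (k-1),
      a.getD ((j-1)*(ℓ-1)+i-1) 0 = (ℓ-1-i)*(k-1)+j+1) :
    ¬ IncCycSub (1 :: a) (k+1) ∧ ¬ DecCycSub (1 :: a) (ℓ+1) := by
  clear hperm
  obtain ⟨K, hKk⟩ : ∃ K, k - 1 = K := ⟨_, rfl⟩
  obtain ⟨Lm, hLl⟩ : ∃ Lm, ℓ - 1 = Lm := ⟨_, rfl⟩
  have hK : 0 < K := by omega
  have hLm : 0 < Lm := by omega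
  rw [hKk, hLl] at ha hform
  obtain ⟨M, hMdef⟩ : ∃ M, M = K * Lm := ⟨_, rfl⟩
  rw [← hMdef] at ha
  set f : ℕ → ℕ := fun p => (Lm - 1 - p % Lm) * K + p / Lm + 2 with hfdef
  -- explicit description of a
  have ha2 : a = List.map f (List.range' 0 M) := by
    apply List.ext_getElem (by simp [ha])
    intro t h1 h2
    have htM : t < M := by rwa [ha] at h1
    have hmt : t % Lm < Lm := Nat.mod_lt _ hLm
    have hdt : t / Lm < K :=
      Nat.div_lt_of_lt_mul (show t < Lm * K by rw [Nat.mul_comm Lm K, ← hMdef]; exact htM)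
    have hfo := hform (t % Lm + 1)
      (by rw [Finset.mem_Icc]; exact ⟨Nat.le_add_left 1 _, by omega⟩)
      (t / Lm + 1)
      (by rw [Finset.mem_Icc]; exact ⟨Nat.le_add_left 1 _, by omega⟩)
    have hidx : (t / Lm + 1 - 1) * Lm + (t % Lm + 1) - 1 = t := by
      simp only [Nat.add_sub_cancel]
      have := Nat.div_add_mod' t Lm
      omega
    rw [hidx] at hfo
    have hsub : Lm - (t % Lm + 1) = Lm - 1 - t % Lm := by omega
    have hval : a.getD t 0 = f t := by
      rw [hfo]
      simp only [hfdef]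
      rw [hsub]
      omega
    rw [← List.getD_eq_getElem a 0 h1, hval]
    simp [List.getElem_range']
  have halen : a.length = M := ha
  -- rotation decomposition
  have hrot : ∀ r : ℕ, ∃ t ≤ M,
      (1 :: a).rotate r =
        List.map f (List.range' t (M - t)) ++ 1 :: List.map f (List.range' 0 t) := by
    intro r
    have hlen1 : (1 :: a).length = M + 1 := by simp [halen]
    have hr' : r % (M+1) < M + 1 := Nat.mod_lt _ (by omega)
    have hre : (1 :: a).rotate r = (1 :: a).rotate (r % (M+1)) := by
      conv_lhs => rw [← List.rotate_mod, hlen1]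
    rcases Nat.eq_zero_or_pos (r % (M+1)) with h0 | h0
    · refine ⟨M, le_refl M, ?_⟩
      rw [hre, h0, List.rotate_zero]
      simp [Nat.sub_self, ha2]
    · obtain ⟨u, hu⟩ : ∃ u, r % (M+1) = u + 1 := ⟨r % (M+1) - 1, by omega⟩
      refine ⟨u, by omega, ?_⟩
      rw [hre, hu, List.rotate_eq_drop_append_take (by rw [hlen1]; omega),
        List.drop_succ_cons, List.take_succ_cons]
      have h1 : (0:ℕ) + 1 * u = u := by omega
      have h2 : (M - u) + u = M := by omega
      have hsplit : List.range' 0 u ++ List.range' u (M - u) = List.range' 0 M := by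
        have h3 : List.range' 0 u 1 ++ List.range' (0 + 1 * u) (M - u) 1 =
            List.range' 0 (u + (M - u)) 1 := List.range'_append
        rw [h1, Nat.add_comm u, h2] at h3
        exact h3
      rw [ha2, ← hsplit, List.map_append, List.drop_left' (by simp),
        List.take_left' (by simp)]
  -- basic facts about f
  have hf2 : ∀ p, 2 ≤ f p := by
    intro p; simp only [hfdef]; exact Nat.le_add_left 2 _
  have hrt : ∀ p < M, (f p - 2) % K = p / Lm ∧ (f p - 2) / K = Lm - 1 - p % Lm := by
    intro p hp
    have hpd : p / Lm < K :=
      Nat.div_lt_of_lt_mul (show p < Lm * K by rw [Nat.mul_comm Lm K, ← hMdef]; exact hp)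
    have h2 : f p - 2 = (Lm - 1 - p % Lm) * K + p / Lm := by
      simp only [hfdef, Nat.add_sub_cancel]
    rw [h2, Nat.mul_comm]
    constructor
    · rw [Nat.mul_add_mod, Nat.mod_eq_of_lt hpd]
    · rw [Nat.mul_add_div hK, Nat.div_eq_of_lt hpd, Nat.add_zero]
  -- increasing bound
  have main_inc : ∀ t ≤ M, ∀ s : List ℕ,
      s.Sublist (List.map f (List.range' t (M - t)) ++ 1 :: List.map f (List.range' 0 t)) →
      s.Pairwise (· < ·) → s.length ≤ K + 1 := by
    intro t ht s hsub hp
    have hdivK : t / Lm ≤ K := by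
      have ht' : t ≤ K * Lm := by omega
      have := Nat.div_le_div_right (c := Lm) ht'
      rwa [Nat.mul_div_cancel _ hLm] at this
    have hmB : (t + Lm - 1)/Lm ≤ K := by
      have h2 : t + Lm - 1 ≤ Lm * K + (Lm - 1) := by rw [Nat.mul_comm]; omega
      have h3 := Nat.div_le_div_right (c := Lm) h2
      rwa [Nat.mul_add_div hLm, Nat.div_eq_of_lt (show Lm - 1 < Lm by omega),
        Nat.add_zero] at h3
    -- bound for sublists of B
    have hBbound : ∀ s2 : List ℕ, s2.Sublist (List.map f (List.range' 0 t)) →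
        s2.Pairwise (· < ·) → s2.length ≤ (t + Lm - 1)/Lm := by
      intro s2 hs2 hp2
      have := chain_bound (φ := fun v => (v - 2) % K) (lo := 0) (m := (t + Lm - 1)/Lm)
        hs2 hp2 ?_ (fun x _ => Nat.zero_le _) ?_
      · simpa using this
      · apply pairwise_map_range'
        intro p q hp0 hpq hq0
        intro hlt
        have hqM : q < K * Lm := by omega
        simp only [hfdef] at hlt
        have hstep : p / Lm < q / Lm := inc_step hK hLm hqM hpq hlt
        simp only [(hrt p (by omega)).1, (hrt q (by omega)).1]
        exact hstep
      · intro x hx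
        rw [List.mem_map] at hx
        obtain ⟨p, hpmem, rfl⟩ := hx
        rw [List.mem_range'_1] at hpmem
        have hpt : p < t := by omega
        simp only [(hrt p (by omega)).1]
        have h1 : p / Lm ≤ (t-1) / Lm := Nat.div_le_div_right (by omega)
        have h2 : (t-1)/Lm < (t + Lm - 1)/Lm := by
          have he : t + Lm - 1 = (t-1) + Lm := by omega
          rw [he, Nat.add_div_right _ hLm]
          omega
        omega
    rw [List.sublist_append_iff] at hsub
    obtain ⟨s1, s2, rfl, hs1, hs2⟩ := hsub
    rw [List.sublist_cons_iff] at hs2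
    rw [List.pairwise_append] at hp
    obtain ⟨hp1, hp2, hp12⟩ := hp
    rcases hs2 with hs2 | ⟨s3, rfl, hs3⟩
    · -- 1 not used
      have hb2 : s2.length ≤ (t + Lm - 1)/Lm := hBbound s2 hs2 hp2
      have hb1 : s1.length ≤ K - t / Lm := by
        have := chain_bound (φ := fun v => (v - 2) % K) (lo := t / Lm) (m := K)
          hs1 hp1 ?_ ?_ ?_
        · exact this
        · apply pairwise_map_range'
          intro p q hp0 hpq hq0
          intro hlt
          have hqM : q < K * Lm := by omega
          simp only [hfdef] at hlt
          have hstep : p / Lm < q / Lm := inc_step hK hLm hqM hpq hlt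
          simp only [(hrt p (by omega)).1, (hrt q (by omega)).1]
          exact hstep
        · intro x hx
          rw [List.mem_map] at hx
          obtain ⟨p, hpmem, rfl⟩ := hx
          rw [List.mem_range'_1] at hpmem
          simp only [(hrt p (by omega)).1]
          exact Nat.div_le_div_right hpmem.1
        · intro x hx
          rw [List.mem_map] at hx
          obtain ⟨p, hpmem, rfl⟩ := hx
          rw [List.mem_range'_1] at hpmem
          simp only [(hrt p (by omega)).1]
          exact Nat.div_lt_of_lt_mul (by rw [Nat.mul_comm Lm K]; omega)
      have hle : (t + Lm - 1)/Lm ≤ t/Lm + 1 := by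
        calc (t + Lm - 1)/Lm ≤ (t + Lm)/Lm := Nat.div_le_div_right (by omega)
          _ = t/Lm + 1 := Nat.add_div_right t hLm
      rw [List.length_append]
      omega
    · -- 1 is used; then s1 = []
      have hs1nil : s1 = [] := by
        cases s1 with
        | nil => rfl
        | cons x xs =>
          exfalso
          have hx1 : x < 1 := hp12 x (show x ∈ x :: xs from List.mem_cons_self) 1 (show 1 ∈ 1 :: s3 from List.mem_cons_self)
          have hxA := hs1.subset (show x ∈ x :: xs from List.mem_cons_self)
          rw [List.mem_map] at hxA
          obtain ⟨p, _, rfl⟩ := hxA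
          have := hf2 p
          omega
      subst hs1nil
      have hp3 : s3.Pairwise (· < ·) := (List.pairwise_cons.1 hp2).2
      have hb3 : s3.length ≤ (t + Lm - 1)/Lm := hBbound s3 hs3 hp3
      simp only [List.nil_append, List.length_cons]
      omega
  -- decreasing bound
  have main_dec : ∀ t ≤ M, ∀ s : List ℕ,
      s.Sublist (List.map f (List.range' t (M - t)) ++ 1 :: List.map f (List.range' 0 t)) →
      s.Pairwise (· > ·) → s.length ≤ Lm + 1 := by
    intro t ht s hsub hp
    set φd : ℕ → ℕ := fun v => if v ≤ 1 then Lm else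
      (Lm - 1 - (v-2)/K) + (if (v-2) % K * Lm + (Lm - 1 - (v-2)/K) < t then 1 else 0)
      with hφdef
    have hphi : ∀ p < M, φd (f p) = p % Lm + (if p < t then 1 else 0) := by
      intro p hpM
      have h2 := hf2 p
      have hmp : p % Lm < Lm := Nat.mod_lt _ hLm
      simp only [hφdef]
      rw [if_neg (by omega), (hrt p hpM).1, (hrt p hpM).2]
      have hlev : Lm - 1 - (Lm - 1 - p % Lm) = p % Lm := by omega
      rw [hlev, Nat.div_add_mod' p Lm]
    have hL : (List.map f (List.range' t (M - t)) ++
        1 :: List.map f (List.range' 0 t)).Pairwise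
        (fun x y => x > y → φd x < φd y) := by
      rw [List.pairwise_append]
      refine ⟨?_, ?_, ?_⟩
      · apply pairwise_map_range'
        intro p q hp0 hpq hq0 hgt
        have hqM : q < K * Lm := by omega
        simp only [hfdef] at hgt
        have hstep : p % Lm < q % Lm := dec_step hK hLm hqM hpq hgt
        rw [hphi p (by omega), hphi q (by omega)]
        have : ¬ p < t := by omega
        have : ¬ q < t := by omega
        simp only [if_neg ‹¬ p < t›, if_neg ‹¬ q < t›]
        omega
      · rw [List.pairwise_cons]
        constructor
        · intro y hy hgt
          exfalso
          rw [List.mem_map] at hy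
          obtain ⟨p, _, rfl⟩ := hy
          have := hf2 p
          omega
        · apply pairwise_map_range'
          intro p q hp0 hpq hq0 hgt
          have hqM : q < K * Lm := by omega
          simp only [hfdef] at hgt
          have hstep : p % Lm < q % Lm := dec_step hK hLm hqM hpq hgt
          rw [hphi p (by omega), hphi q (by omega)]
          simp only [if_pos (show p < t by omega), if_pos (show q < t by omega)]
          omega
      · intro x hx y hy
        rw [List.mem_map] at hx
        obtain ⟨p, hpmem, rfl⟩ := hx
        rw [List.mem_range'_1] at hpmem
        have hpM : p < M := by omega
        have hpt : ¬ p < t := by omega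
        rcases List.mem_cons.1 hy with rfl | hy
        · intro _
          rw [hphi p hpM]
          simp only [hφdef, if_pos (le_refl 1), if_neg hpt]
          have := Nat.mod_lt p hLm
          omega
        · rw [List.mem_map] at hy
          obtain ⟨q, hqmem, rfl⟩ := hy
          rw [List.mem_range'_1] at hqmem
          have hqM : q < K * Lm := by omega
          intro hgt
          simp only [hfdef] at hgt
          have hstep : p % Lm ≤ q % Lm := cross_dec hK hLm (show p < K*Lm by omega) hqM hgt
          rw [hphi p hpM, hphi q (by omega)]
          simp only [if_neg hpt, if_pos (show q < t by omega)]
          omega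
    have := chain_bound (φ := φd) (lo := 0) (m := Lm + 1) hsub hp hL
      (fun x _ => Nat.zero_le _) ?_
    · simpa using this
    · intro x hx
      rcases List.mem_append.1 hx with hx | hx
      · rw [List.mem_map] at hx
        obtain ⟨p, hpmem, rfl⟩ := hx
        rw [List.mem_range'_1] at hpmem
        rw [hphi p (by omega)]
        have := Nat.mod_lt p hLm
        split <;> omega
      · rcases List.mem_cons.1 hx with rfl | hx
        · simp only [hφdef, if_pos (le_refl 1)]
          omega
        · rw [List.mem_map] at hx
          obtain ⟨p, hpmem, rfl⟩ := hx
          rw [List.mem_range'_1] at hpmem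
          rw [hphi p (by omega)]
          have := Nat.mod_lt p hLm
          split <;> omega
  constructor
  · rintro ⟨r, s, hsub, hslen, hsort⟩
    obtain ⟨t, ht, hteq⟩ := hrot r
    rw [hteq] at hsub
    have := main_inc t ht s hsub hsort
    omega
  · rintro ⟨r, s, hsub, hslen, hsort⟩
    obtain ⟨t, ht, hteq⟩ := hrot r
    rw [hteq] at hsub
    have := main_dec t ht s hsub hsort
    omega
end

section
/- For k,ℓ ≥ 2, the cyclic permutation π = (1, a_1, ..., a_{(k-1)(ℓ-1)}) of {1,...,(k-1)(ℓ-1)+1}, where a_{(i-1)(k-1)+j} = (j-1)(ℓ-1)+(ℓ-i)+1 for all i ∈ [ℓ-1], j ∈ [k-1], has no increasing cyclic sub-permutation of length k+1 and no decreasing cyclic sub-permutation of length ℓ+1. -/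
/-- value at cyclic position `q ≥ 1` in the extremal cycle -/
private def vOf (K L q : ℕ) : ℕ := ((q-1) % K) * L + (L - (q-1)/K) + 1

private lemma decompKL {K L q : ℕ} (hK : 1 ≤ K) (hq1 : 1 ≤ q) (hq : q ≤ K * L) :
    (q-1)/K < L ∧ (q-1) % K < K ∧ K * ((q-1)/K) + (q-1) % K = q - 1 :=
  ⟨by rw [Nat.div_lt_iff_lt_mul hK]; have := Nat.mul_comm L K; omega,
   Nat.mod_lt _ hK, Nat.div_add_mod _ _⟩

private lemma two_le_vOf' {L i j : ℕ} (hi : i < L) : 2 ≤ j * L + (L - i) + 1 := by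
  have : 0 ≤ j * L := Nat.zero_le _
  omega

private lemma two_le_vOf {K L q : ℕ} (hK : 1 ≤ K) (hq1 : 1 ≤ q) (hq : q ≤ K*L) :
    2 ≤ vOf K L q := by
  obtain ⟨hi, hj, hd⟩ := decompKL hK hq1 hq
  unfold vOf
  exact two_le_vOf' hi

private lemma inc_same' {L i j i' j' : ℕ} (hii : i ≤ i')
    (hv : j*L + (L-i) + 1 < j'*L + (L-i') + 1) : j < j' := by
  by_contra h
  push_neg at h
  have hBA : j' * L ≤ j * L := Nat.mul_le_mul_right L h
  omega

private lemma inc_cross' {L i j i' j' : ℕ} (hi : i < L)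
    (hv : j*L + (L-i) + 1 < j'*L + (L-i') + 1) : j ≤ j' := by
  by_contra h
  push_neg at h
  have hBA : (j' + 1) * L ≤ j * L := Nat.mul_le_mul_right L (by omega)
  rw [add_mul, one_mul] at hBA
  have : L - i' ≤ L := Nat.sub_le _ _
  omega

private lemma dec_same' {L i j i' j' : ℕ} (hii : i ≤ i') (him : i = i' → j < j')
    (hv : j'*L + (L-i') + 1 < j*L + (L-i) + 1) : i < i' := by
  rcases Nat.lt_or_ge i i' with h | h
  · exact h
  · have heq : i = i' := by omega
    subst heq
    have hjj : j < j' := him rfl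
    have hBA : (j + 1) * L ≤ j' * L := Nat.mul_le_mul_right L (by omega)
    rw [add_mul, one_mul] at hBA
    omega

private lemma pos_cases {n r p p' : ℕ} (hr : r < n) (hp : p < n) (hp' : p' < n) (hpp : p < p') :
    (r ≤ (p + r) % n ∧ r ≤ (p' + r) % n ∧ (p + r) % n < (p' + r) % n) ∨
    ((p + r) % n < r ∧ (p' + r) % n < r ∧ (p + r) % n < (p' + r) % n) ∨
    (r ≤ (p + r) % n ∧ (p' + r) % n < r) := by
  have hc : (p + r) % n < n := Nat.mod_lt _ (by omega)
  have hd : (p' + r) % n < n := Nat.mod_lt _ (by omega)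
  have h1 : (p + r) % n = p + r ∨ (p + r) % n + n = p + r := by
    rcases Nat.lt_or_ge (p + r) n with h | h
    · left; exact Nat.mod_eq_of_lt h
    · right
      have h2 : (p + r) % n = p + r - n := by
        rw [Nat.mod_eq_sub_mod h, Nat.mod_eq_of_lt (by omega)]
      omega
  have h2 : (p' + r) % n = p' + r ∨ (p' + r) % n + n = p' + r := by
    rcases Nat.lt_or_ge (p' + r) n with h | h
    · left; exact Nat.mod_eq_of_lt h
    · right
      have h2 : (p' + r) % n = p' + r - n := by
        rw [Nat.mod_eq_sub_mod h, Nat.mod_eq_of_lt (by omega)]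
      omega
  omega

private lemma fin_spread {m : ℕ} {g : Fin m → ℕ} (hg : ∀ i j : Fin m, i < j → g i < g j)
    (d : ℕ) (hd : d < m) (h0 : 0 < m) : g ⟨0, h0⟩ + d ≤ g ⟨d, hd⟩ := by
  induction d with
  | zero => simp
  | succ e ih =>
      have h1 := ih (by omega)
      have h2 := hg ⟨e, by omega⟩ ⟨e+1, hd⟩ (by simp [Fin.lt_def])
      omega

private lemma inc_label_lt {K L n r q q' u u' : ℕ} (hK : 1 ≤ K) (hL : 1 ≤ L) (hn : n = K*L+1)
    (hrn : r < n) (hqn : q < n) (hq'n : q' < n)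
    (hvx : u = if q = 0 then 1 else vOf K L q)
    (hvy : u' = if q' = 0 then 1 else vOf K L q')
    (huu : u < u')
    (hcase : (r ≤ q ∧ r ≤ q' ∧ q < q') ∨ (q < r ∧ q' < r ∧ q < q') ∨ (r ≤ q ∧ q' < r)) :
    (if q = 0 then 0 else (q-1) % K + 1) + (if q < r then 1 else 0)
      < (if q' = 0 then 0 else (q'-1) % K + 1) + (if q' < r then 1 else 0) := by
  rcases eq_or_ne q 0 with h0 | h0
  · have h1 : q' ≠ 0 := by omega
    rw [if_pos h0, if_neg h1]
    have hj' : (q'-1) % K < K := Nat.mod_lt _ hK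
    obtain ⟨J', hJ'⟩ : ∃ x, (q'-1) % K = x := ⟨_, rfl⟩
    rw [hJ'] at hj' ⊢
    rcases Nat.eq_zero_or_pos r with hr0 | hr0
    · rw [if_neg (by omega), if_neg (by omega)]
      omega
    · rw [if_pos (by omega : q < r), if_pos (by omega : q' < r)]
      omega
  · have h1 : q' ≠ 0 := by
      intro h
      rw [if_neg h0] at hvx
      rw [if_pos h] at hvy
      have h2 := two_le_vOf (L := L) hK (by omega : 1 ≤ q) (by omega : q ≤ K*L)
      omega
    rw [if_neg h0, if_neg h1]
    rw [if_neg h0] at hvx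
    rw [if_neg h1] at hvy
    rw [hvx, hvy] at huu
    obtain ⟨hi, hj, hd⟩ := decompKL (L := L) hK (by omega : 1 ≤ q) (by omega : q ≤ K*L)
    obtain ⟨hi', hj', hd'⟩ := decompKL (L := L) hK (by omega : 1 ≤ q') (by omega : q' ≤ K*L)
    unfold vOf at huu
    obtain ⟨I, hI⟩ : ∃ x, (q-1)/K = x := ⟨_, rfl⟩
    obtain ⟨J, hJ⟩ : ∃ x, (q-1) % K = x := ⟨_, rfl⟩
    obtain ⟨I', hI'⟩ : ∃ x, (q'-1)/K = x := ⟨_, rfl⟩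
    obtain ⟨J', hJ'⟩ : ∃ x, (q'-1) % K = x := ⟨_, rfl⟩
    rw [hI] at hi hd huu
    rw [hJ] at hj hd huu
    rw [hI'] at hi' hd' huu
    rw [hJ'] at hj' hd' huu
    rw [hJ, hJ']
    have hdle : q < q' → I ≤ I' := by
      intro h
      rw [← hI, ← hI']
      exact Nat.div_le_div_right (by omega)
    rcases hcase with ⟨h1', h2', h3'⟩ | ⟨h1', h2', h3'⟩ | ⟨h1', h2'⟩
    · rw [if_neg (by omega), if_neg (by omega)]
      have := inc_same' (hdle h3') huu
      omega
    · rw [if_pos h1', if_pos h2']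
      have := inc_same' (hdle h3') huu
      omega
    · rw [if_neg (by omega), if_pos h2']
      have := inc_cross' hi huu
      omega

private lemma dec_label_lt {K L n r q q' u u' : ℕ} (hK : 1 ≤ K) (hL : 1 ≤ L) (hn : n = K*L+1)
    (hqn : q < n) (hq'n : q' < n) (hq1 : 1 ≤ q) (hq'1 : 1 ≤ q')
    (hvx : u = vOf K L q) (hvy : u' = vOf K L q') (huu : u' < u)
    (hcase : (r ≤ q ∧ r ≤ q' ∧ q < q') ∨ (q < r ∧ q' < r ∧ q < q') ∨ (r ≤ q ∧ q' < r)) :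
    (q-1)/K + (if q < r then L+1 else 0) < (q'-1)/K + (if q' < r then L+1 else 0) := by
  rw [hvx, hvy] at huu
  obtain ⟨hi, hj, hd⟩ := decompKL (L := L) hK hq1 (by omega)
  obtain ⟨hi', hj', hd'⟩ := decompKL (L := L) hK hq'1 (by omega)
  unfold vOf at huu
  obtain ⟨I, hI⟩ : ∃ x, (q-1)/K = x := ⟨_, rfl⟩
  obtain ⟨J, hJ⟩ : ∃ x, (q-1) % K = x := ⟨_, rfl⟩
  obtain ⟨I', hI'⟩ : ∃ x, (q'-1)/K = x := ⟨_, rfl⟩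
  obtain ⟨J', hJ'⟩ : ∃ x, (q'-1) % K = x := ⟨_, rfl⟩
  rw [hI] at hi hd huu
  rw [hJ] at hj hd huu
  rw [hI'] at hi' hd' huu
  rw [hJ'] at hj' hd' huu
  rw [hI, hI']
  have hdle : q < q' → I ≤ I' := by
    intro h
    rw [← hI, ← hI']
    exact Nat.div_le_div_right (by omega)
  have hsame : q < q' → I < I' := by
    intro hqq
    refine dec_same' (hdle hqq) (fun he => ?_) huu
    rw [he] at hd
    omega
  rcases hcase with ⟨h1, h2, h3⟩ | ⟨h1, h2, h3⟩ | ⟨h1, h2⟩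
  · rw [if_neg (by omega), if_neg (by omega)]
    exact hsame h3
  · rw [if_pos h1, if_pos h2]
    have := hsame h3
    omega
  · rw [if_neg (by omega), if_pos h2]
    omega

private lemma dec_label_lt2 {K L n r q q' u u' : ℕ} (hK : 1 ≤ K) (hn : n = K*L+1)
    (hqn : q < n) (hq'n : q' < n) (hq1 : 1 ≤ q) (hq'1 : 1 ≤ q')
    (hvx : u = vOf K L q) (hvy : u' = vOf K L q') (huu : u' < u)
    (hcase : (r ≤ q ∧ r ≤ q' ∧ q < q') ∨ (q < r ∧ q' < r ∧ q < q') ∨ (r ≤ q ∧ q' < r))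
    (hsx : r ≤ q) (hsy : r ≤ q') : (q-1)/K < (q'-1)/K := by
  have hqq : q < q' := by omega
  rw [hvx, hvy] at huu
  obtain ⟨hi, hj, hd⟩ := decompKL (L := L) hK hq1 (by omega)
  obtain ⟨hi', hj', hd'⟩ := decompKL (L := L) hK hq'1 (by omega)
  unfold vOf at huu
  obtain ⟨I, hI⟩ : ∃ x, (q-1)/K = x := ⟨_, rfl⟩
  obtain ⟨J, hJ⟩ : ∃ x, (q-1) % K = x := ⟨_, rfl⟩
  obtain ⟨I', hI'⟩ : ∃ x, (q'-1)/K = x := ⟨_, rfl⟩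
  obtain ⟨J', hJ'⟩ : ∃ x, (q'-1) % K = x := ⟨_, rfl⟩
  rw [hI] at hi hd huu
  rw [hJ] at hj hd huu
  rw [hI'] at hi' hd' huu
  rw [hJ'] at hj' hd' huu
  rw [hI, hI']
  have hdle : I ≤ I' := by
    rw [← hI, ← hI']
    exact Nat.div_le_div_right (by omega)
  refine dec_same' hdle (fun he => ?_) huu
  rw [he] at hd
  omega

theorem extremal_structure_two (k ℓ : ℕ) (hk : 2 ≤ k) (hl : 2 ≤ ℓ) (a : List ℕ)
    (ha : a.length = (k-1)*(ℓ-1))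
    (hperm : (1 :: a).Perm (List.range' 1 ((k-1)*(ℓ-1)+1)))
    (hform : ∀ i ∈ Finset.Icc 1 (ℓ-1), ∀ j ∈ Finset.Icc 1 (k-1),
      a.getD ((i-1)*(k-1)+j-1) 0 = (j-1)*(ℓ-1)+(ℓ-i)+1) :
    ¬ IncCycSub (1 :: a) (k+1) ∧ ¬ DecCycSub (1 :: a) (ℓ+1) := by
  obtain ⟨K, rfl⟩ : ∃ K, k = K + 1 := ⟨k-1, by omega⟩
  obtain ⟨L, rfl⟩ : ∃ L, ℓ = L + 1 := ⟨ℓ-1, by omega⟩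
  have hK : 1 ≤ K := by omega
  have hL : 1 ≤ L := by omega
  simp only [Nat.add_sub_cancel] at ha hform hperm
  set n : ℕ := K * L + 1 with hn
  set c : List ℕ := 1 :: a with hc
  have hclen : c.length = n := by simp [hc, ha, hn]
  have hgetD : ∀ q, 1 ≤ q → q ≤ K * L → a.getD (q-1) 0 = vOf K L q := by
    intro q h1 h2
    have hiL : (q-1)/K < L := by
      rw [Nat.div_lt_iff_lt_mul hK]
      have := Nat.mul_comm L K
      omega
    have hjK : (q-1) % K < K := Nat.mod_lt _ hK
    have h3 := hform ((q-1)/K + 1)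
      (by rw [Finset.mem_Icc]; exact ⟨Nat.le_add_left 1 _, Nat.succ_le_of_lt hiL⟩)
      ((q-1) % K + 1)
      (by rw [Finset.mem_Icc]; exact ⟨Nat.le_add_left 1 _, Nat.succ_le_of_lt hjK⟩)
    have hidx : ((q-1)/K + 1 - 1) * K + ((q-1) % K + 1) - 1 = q - 1 := by
      have hmod := Nat.div_add_mod (q-1) K
      have hcomm : ((q-1)/K + 1 - 1) * K = K * ((q-1)/K) := by
        rw [Nat.add_sub_cancel]; exact Nat.mul_comm _ _
      omega
    rw [hidx] at h3
    rw [h3]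
    unfold vOf
    have : ((q-1) % K + 1 - 1) * L = ((q-1) % K) * L := by rw [Nat.add_sub_cancel]
    omega
  have hval : ∀ q, q < n → c.getD q 0 = (if q = 0 then 1 else vOf K L q) := by
    intro q hq
    match q with
    | 0 => simp [hc]
    | (m+1) =>
        rw [if_neg (by omega)]
        show a.getD m 0 = vOf K L (m+1)
        have := hgetD (m+1) (by omega) (by omega)
        simpa using this
  have hmem1 : ∀ x ∈ c, 1 ≤ x := by
    intro x hx
    have h1 := (hperm.mem_iff).mp hx
    rw [List.mem_range'_1] at h1
    omega
  constructor
  · rintro ⟨r0, s, hsub, hlen, hsort⟩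
    rw [← List.rotate_mod] at hsub
    set r : ℕ := r0 % c.length with hr
    have hrn : r < n := by rw [hr, hclen]; exact Nat.mod_lt _ (by omega)
    have htlen : (c.rotate r).length = n := by rw [List.length_rotate, hclen]
    obtain ⟨f, hf⟩ := List.sublist_iff_exists_fin_orderEmbedding_get_eq.mp hsub
    have hppos : ∀ ix : Fin s.length, ((f ix : Fin (c.rotate r).length) : ℕ) < n := by
      intro ix; rw [← htlen]; exact (f ix).2
    have hQn : ∀ ix : Fin s.length, ((f ix : ℕ) + r) % n < n := by
      intro ix; exact Nat.mod_lt _ (by omega)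
    have hrotD : ∀ p, p < n → (c.rotate r).getD p 0 = c.getD ((p + r) % n) 0 := by
      intro p hp
      rw [List.getD_eq_getElem?_getD, List.getD_eq_getElem?_getD,
        List.getElem?_rotate (by rw [hclen]; exact hp), hclen]
    have hsval : ∀ ix : Fin s.length,
        s.get ix = if ((f ix : ℕ) + r) % n = 0 then 1 else vOf K L (((f ix : ℕ) + r) % n) := by
      intro ix
      rw [hf ix, List.get_eq_getElem, ← List.getD_eq_getElem (c.rotate r) 0 (f ix).2,
        hrotD _ (hppos ix), hval _ (hQn ix)]
    set F : Fin s.length → ℕ := fun ix =>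
      (if ((f ix : ℕ) + r) % n = 0 then 0 else ((((f ix : ℕ) + r) % n) - 1) % K + 1)
      + (if ((f ix : ℕ) + r) % n < r then 1 else 0) with hF
    have hFlt : ∀ ix iy : Fin s.length, ix < iy → F ix < F iy := by
      intro ix iy hxy
      have hflt : (f ix : ℕ) < (f iy : ℕ) := Fin.lt_def.mp (f.strictMono hxy)
      have hcase := pos_cases hrn (hppos ix) (hppos iy) hflt
      have hgt : s.get ix < s.get iy := hsort.rel_get_of_lt hxy
      simp only [hF]
      exact inc_label_lt hK hL hn hrn (hQn ix) (hQn iy) (hsval ix) (hsval iy) hgt hcase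
    have h0m : 0 < s.length := by omega
    have hKm : K + 1 < s.length := by omega
    have hspread := fin_spread hFlt (K+1) hKm h0m
    have hub : ∀ ix : Fin s.length, F ix ≤ K + 1 := by
      intro ix
      simp only [hF]
      have hj : ((((f ix : ℕ) + r) % n) - 1) % K < K := Nat.mod_lt _ hK
      split_ifs <;> omega
    rcases Nat.eq_zero_or_pos r with hr0 | hr0
    · have hub2 : F ⟨K+1, hKm⟩ ≤ K := by
        simp only [hF]
        have hj : ((((f ⟨K+1, hKm⟩ : ℕ) + r) % n) - 1) % K < K := Nat.mod_lt _ hK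
        split_ifs <;> omega
      omega
    · have hlb : 1 ≤ F ⟨0, h0m⟩ := by
        simp only [hF]
        split_ifs <;> omega
      have := hub ⟨K+1, hKm⟩
      omega
  · rintro ⟨r0, s, hsub, hlen, hsort⟩
    rw [← List.rotate_mod] at hsub
    set r : ℕ := r0 % c.length with hr
    have hrn : r < n := by rw [hr, hclen]; exact Nat.mod_lt _ (by omega)
    have htlen : (c.rotate r).length = n := by rw [List.length_rotate, hclen]
    obtain ⟨f, hf⟩ := List.sublist_iff_exists_fin_orderEmbedding_get_eq.mp hsub
    have hppos : ∀ ix : Fin s.length, ((f ix : Fin (c.rotate r).length) : ℕ) < n := by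
      intro ix; rw [← htlen]; exact (f ix).2
    have hQn : ∀ ix : Fin s.length, ((f ix : ℕ) + r) % n < n := by
      intro ix; exact Nat.mod_lt _ (by omega)
    have hrotD : ∀ p, p < n → (c.rotate r).getD p 0 = c.getD ((p + r) % n) 0 := by
      intro p hp
      rw [List.getD_eq_getElem?_getD, List.getD_eq_getElem?_getD,
        List.getElem?_rotate (by rw [hclen]; exact hp), hclen]
    have hsval : ∀ ix : Fin s.length,
        s.get ix = if ((f ix : ℕ) + r) % n = 0 then 1 else vOf K L (((f ix : ℕ) + r) % n) := by
      intro ix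
      rw [hf ix, List.get_eq_getElem, ← List.getD_eq_getElem (c.rotate r) 0 (f ix).2,
        hrotD _ (hppos ix), hval _ (hQn ix)]
    by_cases hone : ∃ ix : Fin s.length, s.get ix = 1
    · obtain ⟨ix0, hix0⟩ := hone
      have hq0 : ((f ix0 : ℕ) + r) % n = 0 := by
        by_contra h
        rw [hsval ix0, if_neg h] at hix0
        have h2 := two_le_vOf (L := L) (q := ((f ix0 : ℕ) + r) % n) hK (by omega)
          (by have := hQn ix0; omega)
        omega
      have hge1 : ∀ iy : Fin s.length, 1 ≤ s.get iy := by
        intro iy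
        apply hmem1
        rw [← List.mem_rotate (n := r)]
        exact hsub.subset (List.get_mem s iy)
      have hbefore : ∀ iy : Fin s.length, iy ≠ ix0 → iy < ix0 := by
        intro iy hne
        rcases lt_or_gt_of_ne hne with h | h
        · exact h
        · exfalso
          have h1 : s.get ix0 > s.get iy := hsort.rel_get_of_lt h
          have h2 := hge1 iy
          omega
      have hseg : ∀ iy : Fin s.length, iy ≠ ix0 →
          r ≤ ((f iy : ℕ) + r) % n ∧ 1 ≤ ((f iy : ℕ) + r) % n := by
        intro iy hne
        have hlt := hbefore iy hne
        have hflt : (f iy : ℕ) < (f ix0 : ℕ) := Fin.lt_def.mp (f.strictMono hlt)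
        have hcase := pos_cases hrn (hppos iy) (hppos ix0) hflt
        rw [hq0] at hcase
        omega
      set T : Finset (Fin s.length) := Finset.univ.erase ix0 with hT
      have hTcard : T.card = L + 1 := by
        rw [hT, Finset.card_erase_of_mem (Finset.mem_univ _), Finset.card_univ, Fintype.card_fin]
        omega
      have hmap : ∀ iy ∈ T, (((((f iy : ℕ) + r) % n) - 1)/K) ∈ Finset.range L := by
        intro iy hiy
        have hne := (Finset.mem_erase.mp hiy).1
        obtain ⟨h1, h2⟩ := hseg iy hne
        exact Finset.mem_range.mpr (decompKL (L := L) hK h2 (by have := hQn iy; omega)).1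
      have hinj : Set.InjOn (fun iy : Fin s.length => ((((f iy : ℕ) + r) % n) - 1)/K) T := by
        have key : ∀ iy iz : Fin s.length, iy ∈ T → iz ∈ T → iy < iz →
            ((((f iy : ℕ) + r) % n) - 1)/K < ((((f iz : ℕ) + r) % n) - 1)/K := by
          intro iy iz hy hz hyz
          have hney := (Finset.mem_erase.mp hy).1
          have hnez := (Finset.mem_erase.mp hz).1
          obtain ⟨hy1, hy2⟩ := hseg iy hney
          obtain ⟨hz1, hz2⟩ := hseg iz hnez
          have hflt : (f iy : ℕ) < (f iz : ℕ) := Fin.lt_def.mp (f.strictMono hyz)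
          have hcase := pos_cases hrn (hppos iy) (hppos iz) hflt
          have hgt : s.get iy > s.get iz := hsort.rel_get_of_lt hyz
          have hvy : s.get iy = vOf K L (((f iy : ℕ) + r) % n) := by
            rw [hsval iy, if_neg (by omega)]
          have hvz : s.get iz = vOf K L (((f iz : ℕ) + r) % n) := by
            rw [hsval iz, if_neg (by omega)]
          exact dec_label_lt2 hK hn (hQn iy) (hQn iz) hy2 hz2 hvy hvz hgt hcase hy1 hz1
        intro x hx y hy hxy
        rcases lt_trichotomy x y with hcc | hcc | hcc
        · exact absurd hxy (Nat.ne_of_lt (key x y (Finset.mem_coe.mp hx) (Finset.mem_coe.mp hy) hcc))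
        · exact hcc
        · exact absurd hxy.symm (Nat.ne_of_lt (key y x (Finset.mem_coe.mp hy) (Finset.mem_coe.mp hx) hcc))
      have hcard := Finset.card_le_card_of_injOn _ hmap hinj
      rw [hTcard, Finset.card_range] at hcard
      omega
    · push_neg at hone
      have hQ1 : ∀ ix : Fin s.length, 1 ≤ ((f ix : ℕ) + r) % n := by
        intro ix
        by_contra h
        have h0 : ((f ix : ℕ) + r) % n = 0 := by omega
        have h1 := hsval ix
        rw [if_pos h0] at h1
        exact hone ix h1
      have hirL : (r-1)/K < L := by
        rcases Nat.eq_zero_or_pos r with h | h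
        · rw [h]
          have h01 : (0 - 1)/K = 0 := by simp
          rw [h01]; exact hL
        · exact (decompKL (L := L) hK h (by omega)).1
      have hmono : ∀ ix iy : Fin s.length, ix < iy →
          (((((f ix : ℕ) + r) % n) - 1)/K + (if ((f ix : ℕ) + r) % n < r then L+1 else 0)) <
          (((((f iy : ℕ) + r) % n) - 1)/K + (if ((f iy : ℕ) + r) % n < r then L+1 else 0)) := by
        intro ix iy hxy
        have hflt : (f ix : ℕ) < (f iy : ℕ) := Fin.lt_def.mp (f.strictMono hxy)
        have hcase := pos_cases hrn (hppos ix) (hppos iy) hflt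
        have hgt : s.get ix > s.get iy := hsort.rel_get_of_lt hxy
        have hvx : s.get ix = vOf K L (((f ix : ℕ) + r) % n) := by
          rw [hsval ix, if_neg (by have := hQ1 ix; omega)]
        have hvy : s.get iy = vOf K L (((f iy : ℕ) + r) % n) := by
          rw [hsval iy, if_neg (by have := hQ1 iy; omega)]
        exact dec_label_lt hK hL hn (hQn ix) (hQn iy) (hQ1 ix) (hQ1 iy) hvx hvy hgt hcase
      have hmemS : ∀ ix : Fin s.length,
          ((((f ix : ℕ) + r) % n) - 1)/K + (if ((f ix : ℕ) + r) % n < r then L+1 else 0) ∈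
            Finset.Icc ((r-1)/K) (L-1) ∪ Finset.Icc (L+1) (L+1+(r-1)/K) := by
        intro ix
        have h1 := hQ1 ix
        have h2 := hQn ix
        have hiKL := (decompKL (L := L) hK h1 (by omega)).1
        rw [Finset.mem_union]
        by_cases hlt : ((f ix : ℕ) + r) % n < r
        · right
          rw [if_pos hlt, Finset.mem_Icc]
          have h3 : ((((f ix : ℕ) + r) % n) - 1)/K ≤ (r-1)/K :=
            Nat.div_le_div_right (by omega)
          refine ⟨Nat.le_add_left (L+1) _, ?_⟩
          rw [Nat.add_comm (L+1) ((r-1)/K)]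
          exact Nat.add_le_add_right h3 (L+1)
        · left
          rw [if_neg hlt, Finset.mem_Icc, Nat.add_zero]
          have h3 : (r-1)/K ≤ ((((f ix : ℕ) + r) % n) - 1)/K :=
            Nat.div_le_div_right (by omega)
          exact ⟨h3, Nat.le_pred_of_lt hiKL⟩
      have hinj : Set.InjOn (fun ix : Fin s.length =>
          ((((f ix : ℕ) + r) % n) - 1)/K + (if ((f ix : ℕ) + r) % n < r then L+1 else 0))
          (Finset.univ : Finset (Fin s.length)) := by
        intro x _ y _ hxy
        rcases lt_trichotomy x y with hcc | hcc | hcc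
        · exact absurd hxy (Nat.ne_of_lt (hmono x y hcc))
        · exact hcc
        · exact absurd hxy.symm (Nat.ne_of_lt (hmono y x hcc))
      have hcard := Finset.card_le_card_of_injOn _ (fun ix _ => hmemS ix) hinj
      have hS2card : (Finset.Icc ((r-1)/K) (L-1) ∪ Finset.Icc (L+1) (L+1+(r-1)/K)).card ≤ L + 1 := by
        calc (Finset.Icc ((r-1)/K) (L-1) ∪ Finset.Icc (L+1) (L+1+(r-1)/K)).card
            ≤ (Finset.Icc ((r-1)/K) (L-1)).card + (Finset.Icc (L+1) (L+1+(r-1)/K)).card :=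
              Finset.card_union_le _ _
          _ ≤ L + 1 := by
              rw [Nat.card_Icc, Nat.card_Icc]
              have h := hirL
              generalize (r-1)/K = w at h ⊢
              omega
      rw [Finset.card_univ, Fintype.card_fin] at hcard
      omega
end

section
/- For k,ℓ ≥ 1, the smallest n such that every cyclic permutation of length n has an increasing cyclic sub-permutation of length k+1 or a decreasing cyclic sub-permutation of length ℓ+1 equals (k-1)(ℓ-1)+2. -/
namespace AlphaAux

open Function Finset in
theorem es {α : Type*} [LinearOrder α] {r s n : ℕ} {f : Fin n → α} (hn : r * s < n)
    (hf : Function.Injective f) :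
    (∃ t : Finset (Fin n), r < t.card ∧ StrictMonoOn f ↑t) ∨
      ∃ t : Finset (Fin n), s < t.card ∧ StrictAntiOn f ↑t := by
  let inc_sequences_ending_in : Fin n → Finset (Finset (Fin n)) := fun i =>
    univ.powerset.filter fun t => Finset.max t = i ∧ StrictMonoOn f ↑t
  let dec_sequences_ending_in : Fin n → Finset (Finset (Fin n)) := fun i =>
    univ.powerset.filter fun t => Finset.max t = i ∧ StrictAntiOn f ↑t
  have inc_i : ∀ i, {i} ∈ inc_sequences_ending_in i := fun i => by
    simp [inc_sequences_ending_in, StrictMonoOn]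
  have dec_i : ∀ i, {i} ∈ dec_sequences_ending_in i := fun i => by
    simp [dec_sequences_ending_in, StrictAntiOn]
  let ab' : Fin n → ℕ × ℕ := by
    intro i
    apply
      (max' ((inc_sequences_ending_in i).image card) (Nonempty.image ⟨{i}, inc_i i⟩ _),
        max' ((dec_sequences_ending_in i).image card) (Nonempty.image ⟨{i}, dec_i i⟩ _))
  generalize hab : ab' = ab
  rsuffices ⟨i, hi⟩ : ∃ i, r < (ab i).1 ∨ s < (ab i).2
  · refine Or.imp ?_ ?_ hi
    on_goal 1 =>
      have : (ab i).1 ∈ image card (inc_sequences_ending_in i) := by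
        simp only [← hab]; exact max'_mem _ (Nonempty.image ⟨{i}, inc_i i⟩ _)
    on_goal 2 =>
      have : (ab i).2 ∈ image card (dec_sequences_ending_in i) := by
        simp only [← hab]; exact max'_mem _ (Nonempty.image ⟨{i}, dec_i i⟩ _)
    all_goals
      intro hi
      rw [mem_image] at this
      obtain ⟨t, ht₁, ht₂⟩ := this
      refine ⟨t, by rwa [ht₂], ?_⟩
      rw [mem_filter] at ht₁
      apply ht₁.2.2
  have : Injective ab := by
    simp only [← hab]
    apply Injective.of_lt_imp_ne
    intro i j k q
    injection q with q₁ q₂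
    cases lt_or_gt_of_ne fun _ => ne_of_lt ‹i < j› (hf ‹f i = f j›)
    on_goal 1 =>
      apply ne_of_lt _ q₁
      have : (ab' i).1 ∈ image card (inc_sequences_ending_in i) := by exact max'_mem _ (Nonempty.image ⟨{i}, inc_i i⟩ _)
    on_goal 2 =>
      apply ne_of_lt _ q₂
      have : (ab' i).2 ∈ image card (dec_sequences_ending_in i) := by exact max'_mem _ (Nonempty.image ⟨{i}, dec_i i⟩ _)
    all_goals
      rw [Nat.lt_iff_add_one_le]
      apply le_max'
      rw [mem_image] at this ⊢
      rcases this with ⟨t, ht₁, ht₂⟩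
      rw [mem_filter] at ht₁
      have : t.max = i := by simp only [ht₁.2.1]
      refine ⟨insert j t, ?_, ?_⟩
      · rw [mem_filter]
        refine ⟨?_, ?_, ?_⟩
        · rw [mem_powerset]; apply subset_univ
        · convert max_insert (a := j) (s := t)
          rw [ht₁.2.1, max_eq_left]
          apply WithBot.coe_le_coe.mpr (le_of_lt ‹i < j›)
        simp only [StrictMonoOn, StrictAntiOn, coe_insert, Set.mem_insert_iff, mem_coe]
        rintro x ⟨rfl | _⟩ y ⟨rfl | _⟩ _
        · apply (irrefl _ ‹j < j›).elim
        · exfalso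
          apply not_le_of_gt (_root_.trans ‹i < j› ‹j < y›) (le_max_of_eq ‹y ∈ t› ‹t.max = i›)
        · first
          | apply lt_of_le_of_lt _ ‹f i < f j›
          | apply lt_of_lt_of_le ‹f j < f i› _
          rcases lt_or_eq_of_le (le_max_of_eq ‹x ∈ t› ‹t.max = i›) with (_ | rfl)
          · apply le_of_lt (ht₁.2.2 ‹x ∈ t› (mem_of_max ‹t.max = i›) ‹x < i›)
          · rfl
        · apply ht₁.2.2 ‹x ∈ t› ‹y ∈ t› ‹x < y›
      · rw [card_insert_of_notMem, ht₂]
        intro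
        apply not_le_of_gt ‹i < j› (le_max_of_eq ‹j ∈ t› ‹t.max = i›)
  by_contra! q
  let ran : Finset (ℕ × ℕ) := (range r).image Nat.succ ×ˢ (range s).image Nat.succ
  have : image ab univ ⊆ ran := by
    rintro ⟨x₁, x₂⟩
    simp only [ran, mem_image, exists_prop, mem_range, mem_univ, mem_product, true_and,
      Prod.ext_iff]
    rintro ⟨i, rfl, rfl⟩
    specialize q i
    have z : 1 ≤ (ab i).1 ∧ 1 ≤ (ab i).2 := by
      simp only [← hab]
      constructor <;>
        · apply le_max'
          rw [mem_image]
          exact ⟨{i}, by solve_by_elim, card_singleton i⟩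
    exact ⟨⟨(ab i).1 - 1, by omega⟩, (ab i).2 - 1, by omega⟩
  apply not_le_of_gt hn
  simpa [ran, Nat.succ_injective, card_image_of_injective, ‹Injective ab›] using card_le_card this

/-- extract a sorted sublist from a StrictMonoOn finset of indices -/
lemma exists_mono_sublist {t : List ℕ} {I : Finset (Fin t.length)}
    (h : StrictMonoOn t.get ↑I) (m : ℕ) (hm : m ≤ I.card) :
    ∃ s : List ℕ, s.Sublist t ∧ s.length = m ∧ s.Pairwise (· < ·) := by
  classical
  set is := I.sort (· ≤ ·) with his
  have hsorted : is.Pairwise (· < ·) := (Finset.sortedLT_sort I).pairwise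
  have hmemI : ∀ a ∈ is, a ∈ I := fun a ha => (Finset.mem_sort _).mp ha
  have hpw : is.Pairwise (fun a b : Fin t.length => (a : ℕ) < (b : ℕ)) :=
    hsorted.imp_of_mem (fun ha hb hab => hab)
  have hsub : (is.map t.get).Sublist t := List.map_getElem_sublist hsorted
  have hval : (is.map t.get).Pairwise (· < ·) := by
    rw [List.pairwise_map]
    exact hsorted.imp_of_mem (fun ha hb hab => h (hmemI _ ha) (hmemI _ hb) hab)
  refine ⟨(is.map t.get).take m, ((is.map t.get).take_sublist m).trans hsub, ?_,
    hval.sublist ((is.map t.get).take_sublist m)⟩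
  rw [List.length_take, List.length_map, his, Finset.length_sort]
  omega

lemma exists_anti_sublist {t : List ℕ} {I : Finset (Fin t.length)}
    (h : StrictAntiOn t.get ↑I) (m : ℕ) (hm : m ≤ I.card) :
    ∃ s : List ℕ, s.Sublist t ∧ s.length = m ∧ s.Pairwise (· > ·) := by
  classical
  set is := I.sort (· ≤ ·) with his
  have hsorted : is.Pairwise (· < ·) := (Finset.sortedLT_sort I).pairwise
  have hmemI : ∀ a ∈ is, a ∈ I := fun a ha => (Finset.mem_sort _).mp ha
  have hpw : is.Pairwise (fun a b : Fin t.length => (a : ℕ) < (b : ℕ)) :=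
    hsorted.imp_of_mem (fun ha hb hab => hab)
  have hsub : (is.map t.get).Sublist t := List.map_getElem_sublist hsorted
  have hval : (is.map t.get).Pairwise (· > ·) := by
    rw [List.pairwise_map]
    exact hsorted.imp_of_mem (fun ha hb hab => h (hmemI _ ha) (hmemI _ hb) hab)
  refine ⟨(is.map t.get).take m, ((is.map t.get).take_sublist m).trans hsub, ?_,
    hval.sublist ((is.map t.get).take_sublist m)⟩
  rw [List.length_take, List.length_map, his, Finset.length_sort]
  omega

lemma rotate_append_length (P Q : List ℕ) : (P ++ Q).rotate P.length = Q ++ P := by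
  rw [List.rotate_eq_drop_append_take (by simp), List.drop_left, List.take_left]

lemma main_mem (k ℓ : ℕ) (hk : 1 ≤ k) (hl : 1 ≤ ℓ) (c : List ℕ)
    (hc : c.Perm (List.range' 1 ((k-1)*(ℓ-1)+2))) :
    IncCycSub c (k+1) ∨ DecCycSub c (ℓ+1) := by
  set n := (k-1)*(ℓ-1)+2 with hn
  have hnmem : n ∈ c := hc.mem_iff.mpr (by
    rw [List.mem_range']
    exact ⟨n - 1, by omega, by omega⟩)
  obtain ⟨u, v, hceq⟩ := List.append_of_mem hnmem
  set t : List ℕ := v ++ u with ht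
  have hrot1 : c.rotate u.length = n :: t := by
    rw [hceq, List.rotate_eq_drop_append_take (by simp), List.drop_left, List.take_left]
    simp [ht]
  have hclen : c.length = n := by simp [hc.length_eq]
  have htlen : t.length = (k-1)*(ℓ-1)+1 := by
    have := hclen
    rw [hceq] at this
    simp only [List.length_append, List.length_cons, ht, hn] at *
    omega
  have hcnd : c.Nodup := hc.nodup_iff.mpr (List.nodup_range')
  have hntnd : (n :: t).Nodup := by
    rw [← hrot1]
    exact (c.rotate_perm u.length).nodup_iff.mpr hcnd
  have htlt : ∀ x ∈ t, x < n := by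
    intro x hx
    have hxc : x ∈ c := by
      have : x ∈ n :: t := List.mem_cons_of_mem _ hx
      rw [← hrot1] at this
      exact (c.rotate_perm u.length).mem_iff.mp this
    have := hc.mem_iff.mp hxc
    rw [List.mem_range'] at this
    obtain ⟨i, hi, rfl⟩ := this
    have hne : 1 + 1 * i ≠ n := fun h => (List.nodup_cons.mp hntnd).1 (h ▸ hx)
    omega
  have hinj : Function.Injective t.get :=
    List.nodup_iff_injective_get.mp (List.nodup_cons.mp hntnd).2
  have hES := es (r := k - 1) (s := ℓ - 1) (f := t.get) (by omega) hinj
  rcases hES with ⟨I, hI, hmono⟩ | ⟨I, hI, hanti⟩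
  · obtain ⟨s, hsub, hslen, hss⟩ := exists_mono_sublist hmono k (by omega)
    refine Or.inl ⟨u.length + 1, s ++ [n], ?_, ?_, ?_⟩
    · rw [← List.rotate_rotate, hrot1, List.rotate_cons_succ, List.rotate_zero]
      exact hsub.append (List.Sublist.refl _)
    · simp [hslen]
    · rw [List.pairwise_append]
      exact ⟨hss, List.pairwise_singleton _ _,
        fun a ha b hb => by
          rw [List.mem_singleton] at hb
          subst hb
          exact htlt a (hsub.subset ha)⟩
  · obtain ⟨s, hsub, hslen, hss⟩ := exists_anti_sublist hanti ℓ (by omega)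
    refine Or.inr ⟨u.length, n :: s, ?_, ?_, ?_⟩
    · rw [hrot1]
      exact hsub.cons_cons n
    · simp [hslen]
    · rw [List.pairwise_cons]
      exact ⟨fun a ha => htlt a (hsub.subset ha), hss⟩








lemma rotate_middle_sublist (u v : List ℕ) (a : ℕ) (r : ℕ) :
    ∃ r', ((u ++ v).rotate r).Sublist ((u ++ a :: v).rotate r') := by
  rcases Nat.eq_zero_or_pos (u ++ v).length with h0 | hpos
  · refine ⟨0, ?_⟩
    rw [List.length_eq_zero_iff.mp h0]
    simp
  set d := u ++ v with hd
  set r0 := r % d.length with hr0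
  have hr0lt : r0 < d.length := Nat.mod_lt _ hpos
  have hrot : d.rotate r = d.rotate r0 := (d.rotate_mod r).symm
  have hsplit : d.rotate r0 = d.drop r0 ++ d.take r0 :=
    List.rotate_eq_drop_append_take (le_of_lt hr0lt)
  have hdecomp : u ++ v = d.take r0 ++ d.drop r0 := (List.take_append_drop r0 d).symm
  rcases List.append_eq_append_iff.mp hdecomp with ⟨w, hw1, hw2⟩ | ⟨w, hw1, hw2⟩
  · -- take r0 d = u ++ w, v = w ++ drop r0 d
    refine ⟨(u ++ a :: w).length, ?_⟩
    have heq : u ++ a :: v = (u ++ a :: w) ++ d.drop r0 := by rw [hw2]; simp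
    rw [hrot, hsplit, hw1, heq, rotate_append_length]
    exact List.Sublist.append (List.Sublist.refl _)
      (List.Sublist.append (List.Sublist.refl u) (List.sublist_cons_self a w))
  · -- u = take r0 d ++ w, drop r0 d = w ++ v
    refine ⟨(d.take r0).length, ?_⟩
    have heq : u ++ a :: v = d.take r0 ++ (w ++ a :: v) := by rw [hw1]; simp
    rw [hrot, hsplit, hw2, heq, rotate_append_length]
    exact List.Sublist.append
      (List.Sublist.append (List.Sublist.refl w) (List.sublist_cons_self a v))
      (List.Sublist.refl _)

lemma inc_mono (u v : List ℕ) (a m : ℕ) (h : IncCycSub (u ++ v) m) :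
    IncCycSub (u ++ a :: v) m := by
  obtain ⟨r, s, hsub, hlen, hsort⟩ := h
  obtain ⟨r', hr'⟩ := rotate_middle_sublist u v a r
  exact ⟨r', s, hsub.trans hr', hlen, hsort⟩

lemma dec_mono (u v : List ℕ) (a m : ℕ) (h : DecCycSub (u ++ v) m) :
    DecCycSub (u ++ a :: v) m := by
  obtain ⟨r, s, hsub, hlen, hsort⟩ := h
  obtain ⟨r', hr'⟩ := rotate_middle_sublist u v a r
  exact ⟨r', s, hsub.trans hr', hlen, hsort⟩

lemma descent (k ℓ n : ℕ)
    (h : ∃ c, c.Perm (List.range' 1 (n+1)) ∧ ¬ IncCycSub c k ∧ ¬ DecCycSub c ℓ) :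
    ∃ c, c.Perm (List.range' 1 n) ∧ ¬ IncCycSub c k ∧ ¬ DecCycSub c ℓ := by
  obtain ⟨c, hperm, hinc, hdec⟩ := h
  have hmem : (n+1) ∈ c := hperm.mem_iff.mpr (by
    rw [List.mem_range']
    exact ⟨n, by omega, by omega⟩)
  obtain ⟨u, v, rfl⟩ := List.append_of_mem hmem
  refine ⟨u ++ v, ?_, fun h => hinc (inc_mono u v _ _ h), fun h => hdec (dec_mono u v _ _ h)⟩
  have h1 : (u ++ (n+1) :: v).Perm ((n+1) :: (u ++ v)) := List.perm_middle
  have h2 : List.range' 1 (n+1) = List.range' 1 n ++ [n+1] := by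
    rw [List.range'_concat, Nat.one_mul, Nat.add_comm]
  have h3 : (List.range' 1 n ++ [n+1]).Perm ((n+1) :: List.range' 1 n) := by
    simpa using (List.perm_middle (a := n+1) (l₁ := List.range' 1 n) (l₂ := []))
  have h4 : ((n+1) :: (u ++ v)).Perm ((n+1) :: List.range' 1 n) :=
    (h1.symm.trans hperm).trans (h2 ▸ h3)
  exact (List.perm_cons _).mp h4




lemma step_inc (K L n : ℕ) (hL : 1 ≤ L) (hn : n = K*L+1) (a a' : ℕ)
    (ha : a < a') (hv : a*L % n < a'*L % n) :
    a*L/n ≤ a'*L/n ∧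
      (a:ℤ) + 1 + (K:ℤ)*(((a'*L/n : ℕ):ℤ) - ((a*L/n : ℕ):ℤ)) ≤ (a':ℤ) := by
  have hnpos : 0 < n := by omega
  have hq : a*L/n ≤ a'*L/n := Nat.div_le_div_right (Nat.mul_le_mul_right _ ha.le)
  refine ⟨hq, ?_⟩
  have h1 := Nat.div_add_mod (a*L) n
  have h2 := Nat.div_add_mod (a'*L) n
  have hv1 : a*L % n < n := Nat.mod_lt _ hnpos
  have hv2 : a'*L % n < n := Nat.mod_lt _ hnpos
  by_contra hcon
  push_neg at hcon
  -- cast to ℤ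
  set q1 := a*L/n
  set q2 := a'*L/n
  set w1 := a*L % n
  set w2 := a'*L % n
  have hd : (a':ℤ) - a ≤ (K:ℤ)*((q2:ℤ) - q1) := by
    have : (a':ℤ) < (a:ℤ) + 1 + (K:ℤ)*((q2:ℤ) - q1) := by exact_mod_cast hcon
    linarith
  have e1 : ((a':ℤ) - a) * L = ((q2:ℤ) - q1) * n + ((w2:ℤ) - w1) := by
    have h1' : (n:ℤ) * q1 + w1 = (a:ℤ) * L := by exact_mod_cast h1
    have h2' : (n:ℤ) * q2 + w2 = (a':ℤ) * L := by exact_mod_cast h2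
    linear_combination h1' - h2'
  have hqz : (0:ℤ) ≤ (q2:ℤ) - q1 := by
    have : (q1:ℤ) ≤ q2 := by exact_mod_cast hq
    linarith
  have hwz : (1:ℤ) ≤ (w2:ℤ) - w1 := by
    have : (w1:ℤ) < w2 := by exact_mod_cast hv
    linarith
  have hnz : (n:ℤ) = K*L+1 := by exact_mod_cast hn
  have hLz : (1:ℤ) ≤ L := by exact_mod_cast hL
  have hmul : ((a':ℤ) - a) * L ≤ (K:ℤ)*((q2:ℤ) - q1) * L :=
    mul_le_mul_of_nonneg_right hd (by linarith)
  nlinarith [e1, hmul, hqz, hwz]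

lemma step_dec (K L n : ℕ) (hL : 1 ≤ L) (hn : n = K*L+1) (a a' : ℕ)
    (ha : a < a') (hv : a'*L % n < a*L % n) :
    a*L/n + 1 ≤ a'*L/n := by
  have hnpos : 0 < n := by omega
  have h1 := Nat.div_add_mod (a*L) n
  have h2 := Nat.div_add_mod (a'*L) n
  have hv1 : a*L % n < n := Nat.mod_lt _ hnpos
  have hv2 : a'*L % n < n := Nat.mod_lt _ hnpos
  by_contra hcon
  push_neg at hcon
  set q1 := a*L/n with hq1d
  set q2 := a'*L/n with hq2d
  set w1 := a*L % n with hw1d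
  set w2 := a'*L % n with hw2d
  have hml : a*L + L = (a+1)*L := by ring
  have hml2 : (a+1)*L ≤ a'*L := Nat.mul_le_mul_right L ha
  have hq : q2 ≤ q1 := by omega
  have hmm := Nat.mul_le_mul_left n hq
  omega

lemma chain_inc (K L n : ℕ) (hL : 1 ≤ L) (hn : n = K*L+1) :
    ∀ (as : List ℕ) (a : ℕ), (a :: as).Pairwise (· < ·) →
      ((a :: as).map (fun x => x*L % n)).Pairwise (· < ·) →
      ∀ b ∈ (a :: as).getLast?, a*L/n ≤ b*L/n ∧
        (a:ℤ) + as.length + (K:ℤ)*(((b*L/n : ℕ):ℤ) - ((a*L/n : ℕ):ℤ)) ≤ (b:ℤ) := by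
  intro as
  induction as with
  | nil =>
    intro a _ _ b hb
    simp only [List.getLast?_singleton, Option.mem_def, Option.some.injEq] at hb
    subst hb
    simp
  | cons a' as ih =>
    intro a hs hv b hb
    rw [List.getLast?_cons_cons] at hb
    have hs' : (a' :: as).Pairwise (· < ·) := hs.of_cons
    have haa' : a < a' := (List.pairwise_cons.mp hs).1 a' List.mem_cons_self
    have hv' : ((a' :: as).map (fun x => x*L % n)).Pairwise (· < ·) := by
      simp only [List.map_cons] at hv ⊢
      exact hv.of_cons
    have hvaa' : a*L % n < a'*L % n := by
      simp only [List.map_cons] at hv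
      exact (List.pairwise_cons.mp hv).1 _ List.mem_cons_self
    obtain ⟨hq1, hstep⟩ := step_inc K L n hL hn a a' haa' hvaa'
    obtain ⟨hq2, hchain⟩ := ih a' hs' hv' b hb
    refine ⟨le_trans hq1 hq2, ?_⟩
    simp only [List.length_cons]
    push_cast
    push_cast at hchain hstep
    linarith

lemma chain_dec (K L n : ℕ) (hL : 1 ≤ L) (hn : n = K*L+1) :
    ∀ (as : List ℕ) (a : ℕ), (a :: as).Pairwise (· < ·) →
      ((a :: as).map (fun x => x*L % n)).Pairwise (· > ·) →
      ∀ b ∈ (a :: as).getLast?, a*L/n + as.length ≤ b*L/n ∧ a ≤ b := by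
  intro as
  induction as with
  | nil =>
    intro a _ _ b hb
    simp only [List.getLast?_singleton, Option.mem_def, Option.some.injEq] at hb
    subst hb
    simp
  | cons a' as ih =>
    intro a hs hv b hb
    rw [List.getLast?_cons_cons] at hb
    have hs' : (a' :: as).Pairwise (· < ·) := hs.of_cons
    have haa' : a < a' := (List.pairwise_cons.mp hs).1 a' List.mem_cons_self
    have hv' : ((a' :: as).map (fun x => x*L % n)).Pairwise (· > ·) := by
      simp only [List.map_cons] at hv ⊢
      exact hv.of_cons
    have hvaa' : a'*L % n < a*L % n := by
      simp only [List.map_cons] at hv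
      exact (List.pairwise_cons.mp hv).1 _ List.mem_cons_self
    have hstep := step_dec K L n hL hn a a' haa' hvaa'
    obtain ⟨hchain, hab⟩ := ih a' hs' hv' b hb
    simp only [List.length_cons]
    omega

set_option maxHeartbeats 1000000 in
lemma key_inc (K L n : ℕ) (hK : 1 ≤ K) (hL : 1 ≤ L) (hn : n = K*L+1)
    (as : List ℕ) (hs : as.Pairwise (· < ·))
    (hw : ∀ x ∈ as, ∀ y ∈ as, (y:ℤ) - x ≤ (K:ℤ)*L)
    (hv : (as.map (fun x => x*L % n)).Pairwise (· < ·)) :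
    as.length ≤ K + 1 := by
  rcases as with _ | ⟨a, as'⟩
  · simp
  have hne : (a::as') ≠ [] := by simp
  have hb : (a::as').getLast? = some ((a::as').getLast hne) :=
    List.getLast?_eq_getLast_of_ne_nil hne
  set b := (a::as').getLast hne with hbdef
  obtain ⟨hq, hchain⟩ := chain_inc K L n hL hn as' a hs hv b hb
  have hbmem : b ∈ a::as' := List.getLast_mem hne
  have hwab := hw a List.mem_cons_self b hbmem
  by_contra hcon
  push_neg at hcon
  simp only [List.length_cons] at hcon
  have hm1 : (K:ℤ) + 1 ≤ (as'.length : ℤ) := by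
    have : K + 1 ≤ as'.length := by omega
    exact_mod_cast this
  have h1 := Nat.div_add_mod (a*L) n
  have h2 := Nat.div_add_mod (b*L) n
  have hnpos : 0 < n := by omega
  have hv1 : a*L % n < n := Nat.mod_lt _ hnpos
  have hv2 : b*L % n < n := Nat.mod_lt _ hnpos
  set q1 := a*L/n
  set q2 := b*L/n
  set w1 := a*L % n
  set w2 := b*L % n
  have h1' : (n:ℤ) * q1 + w1 = (a:ℤ) * L := by exact_mod_cast h1
  have h2' : (n:ℤ) * q2 + w2 = (b:ℤ) * L := by exact_mod_cast h2
  have e1 : ((b:ℤ) - a) * L = ((q2:ℤ) - q1) * n + ((w2:ℤ) - w1) := by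
    linear_combination h1' - h2'
  have hnz : (n:ℤ) = K*L+1 := by exact_mod_cast hn
  have hLz : (1:ℤ) ≤ L := by exact_mod_cast hL
  have hKz : (1:ℤ) ≤ K := by exact_mod_cast hK
  have hqz : (0:ℤ) ≤ (q2:ℤ) - q1 := by
    have : (q1:ℤ) ≤ q2 := by exact_mod_cast hq
    linarith
  have hw1z : (0:ℤ) ≤ (w1:ℤ) := by positivity
  have hw2z : (w2:ℤ) < n := by exact_mod_cast hv2
  set m1 : ℤ := (as'.length : ℤ)
  set T : ℤ := (q2:ℤ) - q1
  -- D ≥ K*T + m1  (from hchain)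
  have hD : (K:ℤ)*T + m1 ≤ (b:ℤ) - a := by linarith [hchain]
  -- D*L ≤ T*n + K*L
  have hDL : ((b:ℤ) - a) * L ≤ T*n + (K:ℤ)*L := by
    have : (w2:ℤ) - w1 ≤ (K:ℤ)*L := by linarith [hnz]
    linarith [e1]
  have hmul1 : ((K:ℤ)*T + m1) * L ≤ ((b:ℤ) - a) * L :=
    mul_le_mul_of_nonneg_right hD (by linarith)
  have hm1L : m1 * L ≤ T + (K:ℤ)*L := by nlinarith [hmul1, hDL, hnz]
  have hKT : (K:ℤ)*T ≤ (K:ℤ)*L - m1 := by linarith [hD, hwab]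
  have hmul2 : m1 * L * K ≤ (T + (K:ℤ)*L) * K :=
    mul_le_mul_of_nonneg_right hm1L (by linarith)
  have hmul3 : ((K:ℤ)+1) * ((K:ℤ)*L+1) ≤ m1 * ((K:ℤ)*L+1) :=
    mul_le_mul_of_nonneg_right hm1 (by positivity)
  nlinarith [hmul2, hmul3, hKT]

set_option maxHeartbeats 1000000 in
lemma key_dec (K L n : ℕ) (hK : 1 ≤ K) (hL : 1 ≤ L) (hn : n = K*L+1)
    (as : List ℕ) (hs : as.Pairwise (· < ·))
    (hw : ∀ x ∈ as, ∀ y ∈ as, (y:ℤ) - x ≤ (K:ℤ)*L)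
    (hv : (as.map (fun x => x*L % n)).Pairwise (· > ·)) :
    as.length ≤ L + 1 := by
  rcases as with _ | ⟨a, as'⟩
  · simp
  have hne : (a::as') ≠ [] := by simp
  have hb : (a::as').getLast? = some ((a::as').getLast hne) :=
    List.getLast?_eq_getLast_of_ne_nil hne
  set b := (a::as').getLast hne with hbdef
  obtain ⟨hchain, hab⟩ := chain_dec K L n hL hn as' a hs hv b hb
  have hbmem : b ∈ a::as' := List.getLast_mem hne
  have hwab := hw a List.mem_cons_self b hbmem
  by_contra hcon
  push_neg at hcon
  simp only [List.length_cons] at hcon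
  have h1 := Nat.div_add_mod (a*L) n
  have h2 := Nat.div_add_mod (b*L) n
  have hnpos : 0 < n := by omega
  have hv1 : a*L % n < n := Nat.mod_lt _ hnpos
  have hv2 : b*L % n < n := Nat.mod_lt _ hnpos
  set q1 := a*L/n
  set q2 := b*L/n
  set w1 := a*L % n
  set w2 := b*L % n
  have h1' : (n:ℤ) * q1 + w1 = (a:ℤ) * L := by exact_mod_cast h1
  have h2' : (n:ℤ) * q2 + w2 = (b:ℤ) * L := by exact_mod_cast h2
  have e1 : ((b:ℤ) - a) * L = ((q2:ℤ) - q1) * n + ((w2:ℤ) - w1) := by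
    linear_combination h1' - h2'
  have hnz : (n:ℤ) = K*L+1 := by exact_mod_cast hn
  have hLz : (1:ℤ) ≤ L := by exact_mod_cast hL
  have hm1 : (L:ℤ) + 1 ≤ (as'.length : ℤ) := by
    have : L + 1 ≤ as'.length := by omega
    exact_mod_cast this
  have hT : (as'.length : ℤ) ≤ (q2:ℤ) - q1 := by
    have : (q1:ℤ) + as'.length ≤ q2 := by exact_mod_cast hchain
    linarith
  have hw1z : (w1:ℤ) < n := by exact_mod_cast hv1
  have hw2z : (0:ℤ) ≤ (w2:ℤ) := by positivity
  set T : ℤ := (q2:ℤ) - q1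
  -- T*n = D*L + (w1 - w2) ≤ K*L*L + (n-1)
  have hTn : T * n ≤ (K:ℤ)*L*L + ((n:ℤ) - 1) := by
    have hD : (b:ℤ) - a ≤ (K:ℤ)*L := hwab
    have hmul : ((b:ℤ) - a) * L ≤ (K:ℤ)*L*L := by
      have := mul_le_mul_of_nonneg_right hD (show (0:ℤ) ≤ L by linarith)
      linarith [this]
    linarith [e1]
  have hmul2 : ((L:ℤ)+1) * n ≤ T * n :=
    mul_le_mul_of_nonneg_right (by linarith [hm1, hT]) (by linarith [hnz, hLz] )
  nlinarith [hTn, hmul2, hnz]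










lemma cex_perm (K L n : ℕ) (hn : n = K*L+1) :
    ((List.range n).map (fun i => i*L % n + 1)).Perm (List.range' 1 n) := by
  have hnpos : 0 < n := by omega
  have hcop : Nat.gcd n L = 1 := by
    have h1 : Nat.Coprime L (1 + L*K) :=
      (Nat.coprime_add_mul_left_right L 1 K).mpr (Nat.coprime_one_right L)
    have h2 : Nat.Coprime L n := by rwa [hn, show K*L+1 = 1+L*K by ring]
    exact Nat.coprime_comm.mp h2
  have hnd : ((List.range n).map (fun i => i*L % n + 1)).Nodup := by
    refine List.Nodup.map_on ?_ List.nodup_range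
    intro i hi j hj hij
    rw [List.mem_range] at hi hj
    have hmod : i*L % n = j*L % n := by omega
    have h3 : i ≡ j [MOD n] := Nat.ModEq.cancel_right_of_coprime hcop hmod
    rwa [Nat.ModEq, Nat.mod_eq_of_lt hi, Nat.mod_eq_of_lt hj] at h3
  have hsub : ((List.range n).map (fun i => i*L % n + 1)) ⊆ List.range' 1 n := by
    intro x hx
    rw [List.mem_map] at hx
    obtain ⟨i, _, rfl⟩ := hx
    rw [List.mem_range']
    exact ⟨i*L % n, Nat.mod_lt _ hnpos, by omega⟩
  exact (hnd.subperm hsub).perm_of_length_le (by simp)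

lemma rotate_range (n r : ℕ) (hn : 0 < n) :
    (List.range n).rotate r = List.range' (r % n) (n - r % n) ++ List.range (r % n) := by
  have h1 : (List.range n).rotate (r % n) = (List.range n).rotate r := by
    have := (List.range n).rotate_mod r
    rwa [List.length_range] at this
  have h2 : List.range n = List.range (r % n) ++ List.range' (r % n) (n - r % n) := by
    have h3 := List.range'_append (s := 0) (m := r % n) (n := n - r % n) (step := 1)
    rw [List.range_eq_range']
    simp only [Nat.zero_add, Nat.one_mul] at h3
    rw [← List.range_eq_range'] at h3
    rw [h3]
    congr 1
    have := Nat.mod_lt r hn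
    omega
  rw [← h1]
  calc (List.range n).rotate (r % n)
      = (List.range (r % n) ++ List.range' (r % n) (n - r % n)).rotate
          (List.range (r % n)).length := by rw [← h2, List.length_range]
    _ = _ := rotate_append_length _ _

set_option maxHeartbeats 800000 in
lemma no_inc (K L n : ℕ) (hK : 1 ≤ K) (hL : 1 ≤ L) (hn : n = K*L+1) :
    ¬ IncCycSub ((List.range n).map (fun i => i*L % n + 1)) (K+2) := by
  rintro ⟨r, s, hsub, hslen, hsort⟩
  have hnpos : 0 < n := by omega
  rw [← List.map_rotate] at hsub
  rw [rotate_range n r hnpos, List.map_append] at hsub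
  obtain ⟨s₁, s₂, rfl, hsub1, hsub2⟩ := List.sublist_append_iff.mp hsub
  obtain ⟨is₁, hisub1, rfl⟩ := List.sublist_map_iff.mp hsub1
  obtain ⟨is₂, hisub2, rfl⟩ := List.sublist_map_iff.mp hsub2
  set r0 := r % n with hr0
  have hr0lt : r0 < n := Nat.mod_lt _ hnpos
  have hm1 : ∀ x ∈ is₁, r0 ≤ x ∧ x < n := by
    intro x hx
    have hx' := hisub1.subset hx
    rw [List.mem_range'] at hx'
    obtain ⟨i, hi, rfl⟩ := hx'
    omega
  have hm2 : ∀ x ∈ is₂, x < r0 := by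
    intro x hx
    have hx' := hisub2.subset hx
    rwa [List.mem_range] at hx'
  have hs1 : is₁.Pairwise (· < ·) := (List.pairwise_lt_range').sublist hisub1
  have hs2 : is₂.Pairwise (· < ·) := List.pairwise_lt_range.sublist hisub2
  set as := is₁ ++ is₂.map (· + n) with has
  have hass : as.Pairwise (· < ·) := by
    rw [has, List.pairwise_append]
    refine ⟨hs1, ?_, ?_⟩
    · rw [List.pairwise_map]
      exact hs2.imp (fun h => by omega)
    · intro x hx y hy
      rw [List.mem_map] at hy
      obtain ⟨z, hz, rfl⟩ := hy
      have := (hm1 x hx).2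
      omega
  have hb : ∀ x ∈ as, r0 ≤ x ∧ x < n + r0 := by
    intro x hx
    rw [has, List.mem_append] at hx
    rcases hx with hx | hx
    · have := hm1 x hx; omega
    · rw [List.mem_map] at hx
      obtain ⟨z, hz, rfl⟩ := hx
      have := hm2 z hz
      omega
  have hwin : ∀ x ∈ as, ∀ y ∈ as, (y:ℤ) - x ≤ (K:ℤ)*L := by
    intro x hx y hy
    have h1 := hb x hx
    have h2 := hb y hy
    have h3 : (y:ℤ) - x ≤ (n:ℤ) - 1 := by omega
    have h4 : (n:ℤ) = (K:ℤ)*L+1 := by exact_mod_cast hn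
    linarith
  have hvals : (as.map (fun x => x*L % n)).Pairwise (· < ·) := by
    have hcongr : (is₂.map (· + n)).map (fun x => x*L % n)
        = is₂.map (fun x => x*L % n) := by
      rw [List.map_map]
      refine List.map_congr_left ?_
      intro z hz
      simp only [Function.comp_apply]
      rw [add_mul, Nat.add_mul_mod_self_left]
    rw [has, List.map_append, hcongr, ← List.map_append]
    rw [← List.map_append] at hsort
    rw [List.pairwise_map] at hsort ⊢
    exact hsort.imp (by intro a b h; omega)
  have hlen : as.length = K + 2 := by
    rw [has]
    simp only [List.length_append, List.length_map] at hslen ⊢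
    omega
  have := key_inc K L n hK hL hn as hass hwin hvals
  omega

set_option maxHeartbeats 800000 in
lemma no_dec (K L n : ℕ) (hK : 1 ≤ K) (hL : 1 ≤ L) (hn : n = K*L+1) :
    ¬ DecCycSub ((List.range n).map (fun i => i*L % n + 1)) (L+2) := by
  rintro ⟨r, s, hsub, hslen, hsort⟩
  have hnpos : 0 < n := by omega
  rw [← List.map_rotate] at hsub
  rw [rotate_range n r hnpos, List.map_append] at hsub
  obtain ⟨s₁, s₂, rfl, hsub1, hsub2⟩ := List.sublist_append_iff.mp hsub
  obtain ⟨is₁, hisub1, rfl⟩ := List.sublist_map_iff.mp hsub1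
  obtain ⟨is₂, hisub2, rfl⟩ := List.sublist_map_iff.mp hsub2
  set r0 := r % n with hr0
  have hr0lt : r0 < n := Nat.mod_lt _ hnpos
  have hm1 : ∀ x ∈ is₁, r0 ≤ x ∧ x < n := by
    intro x hx
    have hx' := hisub1.subset hx
    rw [List.mem_range'] at hx'
    obtain ⟨i, hi, rfl⟩ := hx'
    omega
  have hm2 : ∀ x ∈ is₂, x < r0 := by
    intro x hx
    have hx' := hisub2.subset hx
    rwa [List.mem_range] at hx'
  have hs1 : is₁.Pairwise (· < ·) := (List.pairwise_lt_range').sublist hisub1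
  have hs2 : is₂.Pairwise (· < ·) := List.pairwise_lt_range.sublist hisub2
  set as := is₁ ++ is₂.map (· + n) with has
  have hass : as.Pairwise (· < ·) := by
    rw [has, List.pairwise_append]
    refine ⟨hs1, ?_, ?_⟩
    · rw [List.pairwise_map]
      exact hs2.imp (fun h => by omega)
    · intro x hx y hy
      rw [List.mem_map] at hy
      obtain ⟨z, hz, rfl⟩ := hy
      have := (hm1 x hx).2
      omega
  have hb : ∀ x ∈ as, r0 ≤ x ∧ x < n + r0 := by
    intro x hx
    rw [has, List.mem_append] at hx
    rcases hx with hx | hx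
    · have := hm1 x hx; omega
    · rw [List.mem_map] at hx
      obtain ⟨z, hz, rfl⟩ := hx
      have := hm2 z hz
      omega
  have hwin : ∀ x ∈ as, ∀ y ∈ as, (y:ℤ) - x ≤ (K:ℤ)*L := by
    intro x hx y hy
    have h1 := hb x hx
    have h2 := hb y hy
    have h3 : (y:ℤ) - x ≤ (n:ℤ) - 1 := by omega
    have h4 : (n:ℤ) = (K:ℤ)*L+1 := by exact_mod_cast hn
    linarith
  have hvals : (as.map (fun x => x*L % n)).Pairwise (· > ·) := by
    have hcongr : (is₂.map (· + n)).map (fun x => x*L % n)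
        = is₂.map (fun x => x*L % n) := by
      rw [List.map_map]
      refine List.map_congr_left ?_
      intro z hz
      simp only [Function.comp_apply]
      rw [add_mul, Nat.add_mul_mod_self_left]
    rw [has, List.map_append, hcongr, ← List.map_append]
    rw [← List.map_append] at hsort
    rw [List.pairwise_map] at hsort ⊢
    exact hsort.imp (by intro a b h; omega)
  have hlen : as.length = L + 2 := by
    rw [has]
    simp only [List.length_append, List.length_map] at hslen ⊢
    omega
  have := key_dec K L n hK hL hn as hass hwin hvals
  omega



end AlphaAux

theorem alpha_eq (k ℓ : ℕ) (hk : 1 ≤ k) (hl : 1 ≤ ℓ) :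
    IsLeast {n : ℕ | ∀ c : List ℕ, c.Perm (List.range' 1 n) →
      IncCycSub c (k+1) ∨ DecCycSub c (ℓ+1)} ((k-1)*(ℓ-1)+2) := by
  constructor
  · intro c hc
    exact AlphaAux.main_mem k ℓ hk hl c hc
  · intro n hn
    simp only [Set.mem_setOf_eq] at hn
    by_contra hcon
    push_neg at hcon
    set K := k - 1 with hKd
    set L := ℓ - 1 with hLd
    set N := K*L+1 with hN
    have singleton_cex : ∀ m : ℕ, 1 ≤ m →
        (¬ IncCycSub [1] (m+1)) ∧ (¬ DecCycSub [1] (m+1)) := by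
      intro m hm
      constructor <;>
      · rintro ⟨r, s, hsub, hlen, _⟩
        have h1 := hsub.length_le
        rw [List.length_rotate] at h1
        simp at h1
        omega
    have hGoodN : ∃ c, c.Perm (List.range' 1 N) ∧
        ¬ IncCycSub c (k+1) ∧ ¬ DecCycSub c (ℓ+1) := by
      rcases Nat.eq_zero_or_pos K with hK0 | hKpos
      · refine ⟨[1], ?_, (singleton_cex k hk).1, (singleton_cex ℓ hl).2⟩
        have h1 : N = 1 := by rw [hN, hK0, Nat.zero_mul]
        rw [h1, show List.range' 1 1 = [1] from rfl]
      rcases Nat.eq_zero_or_pos L with hL0 | hLpos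
      · refine ⟨[1], ?_, (singleton_cex k hk).1, (singleton_cex ℓ hl).2⟩
        have h1 : N = 1 := by rw [hN, hL0, Nat.mul_zero]
        rw [h1, show List.range' 1 1 = [1] from rfl]
      refine ⟨(List.range N).map (fun i => i*L % N + 1), AlphaAux.cex_perm K L N rfl,
        ?_, ?_⟩
      · have h1 := AlphaAux.no_inc K L N hKpos hLpos rfl
        have h2 : k + 1 = K + 2 := by omega
        rwa [h2]
      · have h1 := AlphaAux.no_dec K L N hKpos hLpos rfl
        have h2 : ℓ + 1 = L + 2 := by omega
        rwa [h2]
    have hdown : ∀ j, ∃ c, c.Perm (List.range' 1 (N - j)) ∧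
        ¬ IncCycSub c (k+1) ∧ ¬ DecCycSub c (ℓ+1) := by
      intro j
      induction j with
      | zero => simpa using hGoodN
      | succ j ih =>
        rcases le_or_gt N j with h | h
        · have he : N - (j+1) = N - j := by omega
          rwa [he]
        · have he : N - j = (N - (j+1)) + 1 := by omega
          rw [he] at ih
          exact AlphaAux.descent _ _ _ ih
    obtain ⟨c, hc, hinc, hdec⟩ := hdown (N - n)
    have hNn : N - (N - n) = n := by omega
    rw [hNn] at hc
    rcases hn c hc with h | h
    · exact hinc h
    · exact hdec h
end

section
/- Let k,ℓ ≥ 2 and let the cyclic permutation π = (1, a_1, ..., a_{(k-1)(ℓ-1)+1}) of {1,...,(k-1)(ℓ-1)+2} be given. If the linear sequence [a_1, ..., a_{(k-1)(ℓ-1)+1}] has an increasing subsequence of length k, then π has an increasing cyclic sub-permutation of length k+1; if the sequence has a decreasing subsequence of length ℓ, then π has a decreasing cyclic sub-permutation of length ℓ+1. -/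
theorem linear_to_cyclic (k ℓ : ℕ) (hk : 2 ≤ k) (hl : 2 ≤ ℓ) (a : List ℕ)
    (hperm : (1 :: a).Perm (List.range' 1 ((k-1)*(ℓ-1)+2))) :
    ((∃ s : List ℕ, s.Sublist a ∧ s.length = k ∧ s.Pairwise (· < ·)) → IncCycSub (1 :: a) (k+1)) ∧
    ((∃ s : List ℕ, s.Sublist a ∧ s.length = ℓ ∧ s.Pairwise (· > ·)) → DecCycSub (1 :: a) (ℓ+1)) := by
  have hnd : (1 :: a).Nodup := hperm.nodup_iff.mpr (List.nodup_range' (h := Nat.one_pos))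
  have hone : (1 : ℕ) ∉ a := (List.nodup_cons.mp hnd).1
  have hgt : ∀ x ∈ a, 1 < x := by
    intro x hx
    have hx' : x ∈ List.range' 1 ((k-1)*(ℓ-1)+2) := hperm.subset (List.mem_cons_of_mem _ hx)
    have h1 : 1 ≤ x := (List.mem_range'_1.mp hx').1
    rcases lt_or_eq_of_le h1 with h | h
    · exact h
    · exact absurd (h ▸ hx) hone
  constructor
  · rintro ⟨s, hsub, hlen, hsort⟩
    refine ⟨0, 1 :: s, ?_, by simp [hlen], ?_⟩
    · rw [List.rotate_zero]
      exact hsub.cons₂ 1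
    · rw [List.pairwise_cons]
      exact ⟨fun x hx => hgt x (hsub.subset hx), hsort⟩
  · rintro ⟨s, hsub, hlen, hsort⟩
    refine ⟨1, s ++ [1], ?_, by simp [hlen], ?_⟩
    · have : (1 :: a).rotate 1 = a ++ [1] := by
        rw [List.rotate_cons_succ, List.rotate_zero]
      rw [this]
      exact hsub.append (List.Sublist.refl [1])
    · rw [List.pairwise_append]
      exact ⟨hsort, List.pairwise_singleton _ _,
        fun x hx y hy => by simp at hy; subst hy; exact hgt x (hsub.subset hx)⟩
end

section
/- Let a = [a_1,...,a_{kℓ}] be a permutation of {1,...,kℓ} with no increasing subsequence of length k+1 and no decreasing subsequence of length ℓ+1. Then the grid function γ_a : [kℓ] → [ℓ]×[k], defined by γ_a(t) = (i,j) where i is the length of the longest decreasing subsequence of a ending at a_t and j is the length of the longest increasing subsequence of a ending at a_t, is a bijection. -/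
/-- Length of the longest decreasing subsequence of `a` ending at the `t`-th
entry (1-based) of `a`. -/
noncomputable def gridI (a : List ℕ) (t : ℕ) : ℕ :=
  sSup {r | ∃ s : List ℕ, s.Sublist (a.take t) ∧ s.length = r ∧
    s.getLast? = a[t-1]? ∧ s.Pairwise (· > ·)}

/-- Length of the longest increasing subsequence of `a` ending at the `t`-th
entry (1-based) of `a`. -/
noncomputable def gridJ (a : List ℕ) (t : ℕ) : ℕ :=
  sSup {r | ∃ s : List ℕ, s.Sublist (a.take t) ∧ s.length = r ∧
    s.getLast? = a[t-1]? ∧ s.Pairwise (· < ·)}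

def gridSet (r : ℕ → ℕ → Prop) (a : List ℕ) (t : ℕ) : Set ℕ :=
  {n | ∃ s : List ℕ, s.Sublist (a.take t) ∧ s.length = n ∧
    s.getLast? = a[t-1]? ∧ s.Pairwise r}

lemma gridI_eq (a : List ℕ) (t : ℕ) : gridI a t = sSup (gridSet (· > ·) a t) := rfl
lemma gridJ_eq (a : List ℕ) (t : ℕ) : gridJ a t = sSup (gridSet (· < ·) a t) := rfl

lemma pairwise_rel_getLast {α} {r : α → α → Prop} {l : List α} (h : l.Pairwise r)
    {b : α} (hb : b ∈ l) (hne : l ≠ []) : b = l.getLast hne ∨ r b (l.getLast hne) := by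
  have heq := List.dropLast_append_getLast hne
  rw [← heq] at h hb
  rw [List.pairwise_append] at h
  rcases List.mem_append.1 hb with h1 | h2
  · exact Or.inr (h.2.2 b h1 _ (List.mem_singleton_self _))
  · exact Or.inl (List.mem_singleton.1 h2)

lemma one_mem_gridSet (r : ℕ → ℕ → Prop) (a : List ℕ) (t : ℕ)
    (ht1 : 1 ≤ t) (ht2 : t ≤ a.length) : 1 ∈ gridSet r a t := by
  have h : t - 1 < a.length := by omega
  have h2 : t - 1 < (a.take t).length := by simp; omega
  refine ⟨[a[t-1]], ?_, rfl, ?_, by simp⟩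
  · rw [List.singleton_sublist, show a[t-1] = (a.take t)[t-1] from List.getElem_take.symm]
    exact List.getElem_mem h2
  · simp [List.getElem?_eq_getElem h]

lemma gridSet_bound {r : ℕ → ℕ → Prop} {a : List ℕ} {m : ℕ}
    (hm : ¬ ∃ s : List ℕ, s.Sublist a ∧ s.length = m+1 ∧ s.Pairwise r)
    {t x : ℕ} (hx : x ∈ gridSet r a t) : x ≤ m := by
  obtain ⟨s, hsub, rfl, -, hp⟩ := hx
  by_contra hlt
  exact hm ⟨s.take (m+1), ((s.take_sublist _).trans hsub).trans (a.take_sublist t),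
    by simp; omega, hp.sublist (s.take_sublist _)⟩

lemma sSup_mem_gridSet {r : ℕ → ℕ → Prop} {a : List ℕ} {m t : ℕ}
    (hm : ¬ ∃ s : List ℕ, s.Sublist a ∧ s.length = m+1 ∧ s.Pairwise r)
    (ht1 : 1 ≤ t) (ht2 : t ≤ a.length) :
    sSup (gridSet r a t) ∈ gridSet r a t ∧ 1 ≤ sSup (gridSet r a t) ∧
      sSup (gridSet r a t) ≤ m := by
  have hb : BddAbove (gridSet r a t) := ⟨m, fun x hx => gridSet_bound hm hx⟩
  have hmem := Nat.sSup_mem ⟨1, one_mem_gridSet r a t ht1 ht2⟩ hb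
  exact ⟨hmem, le_csSup hb (one_mem_gridSet r a t ht1 ht2), gridSet_bound hm hmem⟩

lemma gridSet_step {r : ℕ → ℕ → Prop} [IsTrans ℕ r] {a : List ℕ} {m s t : ℕ}
    (hm : ¬ ∃ u : List ℕ, u.Sublist a ∧ u.length = m+1 ∧ u.Pairwise r)
    (hs1 : 1 ≤ s) (hst : s < t) (ht : t ≤ a.length)
    (hsl : s - 1 < a.length) (htl : t - 1 < a.length)
    (hr : r a[s-1] a[t-1]) :
    sSup (gridSet r a s) + 1 ≤ sSup (gridSet r a t) := by
  obtain ⟨⟨w, hwsub, hwlen, hwlast, hwp⟩, hge1, -⟩ :=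
    sSup_mem_gridSet hm hs1 (by omega : s ≤ a.length)
  have hwne : w ≠ [] := by
    intro h; rw [h] at hwlen; simp at hwlen; omega
  have hlast : w.getLast hwne = a[s-1] := by
    rw [List.getLast?_eq_getLast hwne, List.getElem?_eq_getElem hsl] at hwlast
    exact Option.some_injective _ hwlast
  have hb : BddAbove (gridSet r a t) := ⟨m, fun x hx => gridSet_bound hm hx⟩
  refine le_csSup hb ⟨w ++ [a[t-1]], ?_, by simp [hwlen], by simp [List.getElem?_eq_getElem htl], ?_⟩
  · -- sublist
    have hdl : t - 1 - s < ((a.take t).drop s).length := by simp; omega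
    have hmem : a[t-1] ∈ (a.take t).drop s := by
      have : ((a.take t).drop s)[t-1-s] = a[t-1] := by
        rw [List.getElem_drop, List.getElem_take]
        congr 1; omega
      rw [← this]; exact List.getElem_mem hdl
    have hsplit : a.take s ++ (a.take t).drop s = a.take t := by
      have := List.take_append_drop s (a.take t)
      rwa [List.take_take, min_eq_left (by omega : s ≤ t)] at this
    calc (w ++ [a[t-1]]).Sublist (a.take s ++ (a.take t).drop s) :=
          hwsub.append (List.singleton_sublist.2 hmem)
      _ = a.take t := hsplit
  · rw [List.pairwise_append]
    refine ⟨hwp, List.pairwise_singleton _ _, ?_⟩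
    intro b hb c hc
    rw [List.mem_singleton] at hc; subst hc
    rcases pairwise_rel_getLast hwp hb hwne with h | h
    · rw [h, hlast]; exact hr
    · exact Trans.trans h (hlast ▸ hr)

theorem grid_bijection (k ℓ : ℕ) (a : List ℕ)
    (hperm : a.Perm (List.range' 1 (k*ℓ)))
    (hinc : ¬ ∃ s : List ℕ, s.Sublist a ∧ s.length = k+1 ∧ s.Pairwise (· < ·))
    (hdec : ¬ ∃ s : List ℕ, s.Sublist a ∧ s.length = ℓ+1 ∧ s.Pairwise (· > ·)) :
    Set.BijOn (fun t => (gridI a t, gridJ a t))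
      (↑(Finset.Icc 1 (k*ℓ)) : Set ℕ)
      (↑(Finset.Icc 1 ℓ ×ˢ Finset.Icc 1 k) : Set (ℕ × ℕ)) := by
  have hlen : a.length = k * ℓ := by rw [hperm.length_eq, List.length_range']
  have hnd : a.Nodup := by rw [hperm.nodup_iff]; exact List.nodup_range'
  have hinc' : ¬ ∃ s : List ℕ, s.Sublist a ∧ s.length = k+1 ∧ s.Pairwise (· < ·) := hinc
  have hdec' : ¬ ∃ s : List ℕ, s.Sublist a ∧ s.length = ℓ+1 ∧ s.Pairwise (· > ·) := hdec
  have hmaps : Set.MapsTo (fun t => (gridI a t, gridJ a t))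
      (↑(Finset.Icc 1 (k*ℓ)) : Set ℕ)
      (↑(Finset.Icc 1 ℓ ×ˢ Finset.Icc 1 k) : Set (ℕ × ℕ)) := by
    intro t ht
    simp only [Finset.coe_Icc, Set.mem_Icc] at ht
    obtain ⟨-, h1, h2⟩ := sSup_mem_gridSet hdec' ht.1 (by omega : t ≤ a.length)
    obtain ⟨-, h3, h4⟩ := sSup_mem_gridSet hinc' ht.1 (by omega : t ≤ a.length)
    simp only [Finset.coe_product, Set.mem_prod, Finset.mem_coe, Finset.mem_Icc]
    exact ⟨⟨h1, h2⟩, ⟨h3, h4⟩⟩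
  have key : ∀ s t : ℕ, s ∈ Finset.Icc 1 (k*ℓ) → t ∈ Finset.Icc 1 (k*ℓ) → s < t →
      (gridI a s, gridJ a s) ≠ (gridI a t, gridJ a t) := by
    intro s t hs ht hst
    rw [Finset.mem_Icc] at hs ht
    have hsl : s - 1 < a.length := by omega
    have htl : t - 1 < a.length := by omega
    have hne : a[s-1] ≠ a[t-1] := by
      simp only [ne_eq, hnd.getElem_inj_iff]; omega
    rcases hne.lt_or_gt with h | h
    · have := gridSet_step hinc' hs.1 hst (by omega) hsl htl h
      intro hcontra
      rw [Prod.mk.injEq] at hcontra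
      rw [gridJ_eq, gridJ_eq] at hcontra
      omega
    · have := gridSet_step hdec' hs.1 hst (by omega) hsl htl h
      intro hcontra
      rw [Prod.mk.injEq] at hcontra
      rw [gridI_eq, gridI_eq] at hcontra
      omega
  have hinj : Set.InjOn (fun t => (gridI a t, gridJ a t))
      (↑(Finset.Icc 1 (k*ℓ)) : Set ℕ) := by
    intro s hs t ht heq
    by_contra hne
    rcases Ne.lt_or_gt hne with h | h
    · exact key s t hs ht h heq
    · exact key t s ht hs h heq.symm
  refine ⟨hmaps, hinj, ?_⟩
  have hsub : (Finset.Icc 1 (k*ℓ)).image (fun t => (gridI a t, gridJ a t)) ⊆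
      Finset.Icc 1 ℓ ×ˢ Finset.Icc 1 k := by
    intro x hx
    rw [Finset.mem_image] at hx
    obtain ⟨t, ht, rfl⟩ := hx
    exact hmaps ht
  have hcard : (Finset.Icc 1 ℓ ×ˢ Finset.Icc 1 k).card ≤
      ((Finset.Icc 1 (k*ℓ)).image (fun t => (gridI a t, gridJ a t))).card := by
    rw [Finset.card_image_of_injOn hinj, Finset.card_product, Nat.card_Icc,
      Nat.card_Icc, Nat.card_Icc]
    simp [Nat.mul_comm]
  have heq := Finset.eq_of_subset_of_card_le hsub hcard
  intro x hx
  rw [← heq] at hx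
  rw [Finset.coe_image] at hx
  exact hx
end

section
/- Let a ∈ S_{k,ℓ} (a permutation of {1,...,kℓ} with longest increasing subsequence length k and longest decreasing subsequence length ℓ) with grid function γ_a. If γ_a(t_1) = (i_1,j_1), γ_a(t_2) = (i_2,j_2), i_2 ≤ i_1, and j_2 ≤ j_1, then t_2 ≤ t_1. -/
lemma last_rel {r : ℕ → ℕ → Prop} (htr : Transitive r) :
    ∀ (s : List ℕ) (x : ℕ), s.Pairwise r → s.getLast? = some x → ∀ b ∈ s, b = x ∨ r b x := by
  intro s
  induction s with
  | nil => simp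
  | cons c t ih =>
    intro x hs hl b hb
    cases t with
    | nil =>
      simp only [List.getLast?_singleton] at hl
      simp only [List.mem_singleton] at hb
      left
      subst hb
      exact Option.some_injective _ hl
    | cons d u =>
      rw [List.getLast?_cons_cons] at hl
      rcases List.mem_cons.1 hb with rfl | hb'
      · rcases ih x (List.pairwise_cons.1 hs).2 hl d List.mem_cons_self with h | h
        · right; rw [← h]; exact (List.pairwise_cons.1 hs).1 d List.mem_cons_self
        · right; exact htr ((List.pairwise_cons.1 hs).1 d List.mem_cons_self) h
      · exact ih x (List.pairwise_cons.1 hs).2 hl b hb'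

lemma sSup_step (r : ℕ → ℕ → Prop) (htr : Transitive r) (a : List ℕ) (t₁ t₂ x y : ℕ)
    (h1 : 1 ≤ t₁) (h12 : t₁ < t₂) (h2 : t₂ ≤ a.length)
    (hx : a[t₁-1]? = some x) (hy : a[t₂-1]? = some y) (hxy : r x y) :
    sSup {r' | ∃ s : List ℕ, s.Sublist (a.take t₁) ∧ s.length = r' ∧
      s.getLast? = a[t₁-1]? ∧ s.Pairwise r} <
    sSup {r' | ∃ s : List ℕ, s.Sublist (a.take t₂) ∧ s.length = r' ∧
      s.getLast? = a[t₂-1]? ∧ s.Pairwise r} := by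
  set S₁ := {r' | ∃ s : List ℕ, s.Sublist (a.take t₁) ∧ s.length = r' ∧
      s.getLast? = a[t₁-1]? ∧ s.Pairwise r} with hS₁
  set S₂ := {r' | ∃ s : List ℕ, s.Sublist (a.take t₂) ∧ s.length = r' ∧
      s.getLast? = a[t₂-1]? ∧ s.Pairwise r} with hS₂
  have htake₁ : a.take t₁ = a.take (t₁ - 1) ++ [x] := by
    have : t₁ = (t₁ - 1) + 1 := by omega
    rw [this, List.take_succ, hx]; rfl
  have htake₂ : a.take t₂ = a.take (t₂ - 1) ++ [y] := by
    have : t₂ = (t₂ - 1) + 1 := by omega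
    rw [this, List.take_succ, hy]; rfl
  have hbdd : ∀ t : ℕ, BddAbove {r' | ∃ s : List ℕ, s.Sublist (a.take t) ∧ s.length = r' ∧
      s.getLast? = a[t-1]? ∧ s.Pairwise r} := by
    intro t
    refine ⟨t, fun r' hr' => ?_⟩
    obtain ⟨s, hsub, hlen, -, -⟩ := hr'
    have := hsub.length_le
    have := List.length_take_le t a
    omega
  have hne : S₁.Nonempty := by
    refine ⟨1, [x], ?_, rfl, by simp [hx], List.pairwise_singleton _ x⟩
    rw [htake₁]
    exact (List.sublist_append_right _ _)
  have hmem : sSup S₁ ∈ S₁ := Nat.sSup_mem hne (hbdd t₁)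
  obtain ⟨s, hsub, hlen, hlast, hsort⟩ := hmem
  have hlastx : s.getLast? = some x := by rw [hlast, hx]
  have hmem₂ : sSup S₁ + 1 ∈ S₂ := by
    refine ⟨s ++ [y], ?_, by simp [hlen], by simp [List.getLast?_concat, hy], ?_⟩
    · rw [htake₂]
      refine List.Sublist.append ?_ (List.Sublist.refl _)
      refine hsub.trans ?_
      exact ((List.take_prefix_take_left (by omega : t₁ ≤ t₂ - 1)).sublist)
    · refine List.pairwise_append.2 ⟨hsort, List.pairwise_singleton _ y, fun b hb c hc => ?_⟩
      rw [List.mem_singleton] at hc; subst hc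
      rcases last_rel htr s x hsort hlastx b hb with rfl | h
      · exact hxy
      · exact htr h hxy
  have hle : sSup S₁ + 1 ≤ sSup S₂ := le_csSup (hbdd t₂) hmem₂
  omega

theorem grid_ranking_order (k ℓ : ℕ) (a : List ℕ)
    (hperm : a.Perm (List.range' 1 (k*ℓ)))
    (hinc : ¬ ∃ s : List ℕ, s.Sublist a ∧ s.length = k+1 ∧ s.Pairwise (· < ·))
    (hdec : ¬ ∃ s : List ℕ, s.Sublist a ∧ s.length = ℓ+1 ∧ s.Pairwise (· > ·))
    (t₁ t₂ : ℕ) (ht₁ : t₁ ∈ Finset.Icc 1 (k*ℓ)) (ht₂ : t₂ ∈ Finset.Icc 1 (k*ℓ))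
    (hi : gridI a t₂ ≤ gridI a t₁) (hj : gridJ a t₂ ≤ gridJ a t₁) :
    t₂ ≤ t₁ := by
  by_contra hcon
  push_neg at hcon
  rw [Finset.mem_Icc] at ht₁ ht₂
  have ha : a.length = k * ℓ := by
    have := hperm.length_eq
    simpa using this
  have hnodup : a.Nodup := hperm.nodup_iff.2 (List.nodup_range' (h := Nat.one_pos))
  have h1 : t₁ - 1 < a.length := by omega
  have h2 : t₂ - 1 < a.length := by omega
  set x := a[t₁ - 1] with hxdef
  set y := a[t₂ - 1] with hydef
  have hx : a[t₁-1]? = some x := List.getElem?_eq_getElem h1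
  have hy : a[t₂-1]? = some y := List.getElem?_eq_getElem h2
  have hne : x ≠ y := by
    intro h
    have := (List.Nodup.getElem_inj_iff hnodup).1 h
    omega
  rcases lt_or_gt_of_ne hne with hlt | hgt
  · have := sSup_step (· < ·) (fun _ _ _ h h' => lt_trans h h') a t₁ t₂ x y
      (by omega) hcon (by omega) hx hy hlt
    unfold gridJ at hj
    omega
  · have := sSup_step (· > ·) (fun _ _ _ h h' => lt_trans h' h) a t₁ t₂ x y
      (by omega) hcon (by omega) hx hy hgt
    unfold gridI at hi
    omega
end

section
/- The map φ sending a ∈ S_{k,ℓ} to the pair (R_a, V_a) of its grid-ranking and grid-valuation is injective. -/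
namespace PhiInj

def gset (r : ℕ → ℕ → Prop) (a : List ℕ) (t : ℕ) : Set ℕ :=
  {n | ∃ s : List ℕ, s.Sublist (a.take t) ∧ s.length = n ∧
    s.getLast? = a[t-1]? ∧ s.Pairwise r}

lemma gridI_eq (a : List ℕ) (t : ℕ) : gridI a t = sSup (gset (· > ·) a t) := rfl
lemma gridJ_eq (a : List ℕ) (t : ℕ) : gridJ a t = sSup (gset (· < ·) a t) := rfl

lemma sorted_rel_getLast {r : ℕ → ℕ → Prop} :
    ∀ {s : List ℕ} {x y : ℕ}, s.Pairwise r → x ∈ s → s.getLast? = some y →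
      x = y ∨ r x y := by
  intro s
  induction s with
  | nil => simp
  | cons hd tl ih =>
    intro x y hsort hx hlast
    cases tl with
    | nil =>
      simp only [List.mem_singleton] at hx
      simp only [List.getLast?_singleton, Option.some.injEq] at hlast
      left; omega
    | cons hd2 tl2 =>
      rw [List.getLast?_cons_cons] at hlast
      rcases List.mem_cons.mp hx with rfl | hx'
      · right
        exact (List.pairwise_cons.mp hsort).1 y ((List.mem_of_getLast? hlast))
      · exact ih hsort.of_cons hx' hlast

lemma length_le_of_no {r : ℕ → ℕ → Prop} {a : List ℕ} {m : ℕ}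
    (hno : ¬ ∃ s : List ℕ, s.Sublist a ∧ s.length = m+1 ∧ s.Pairwise r)
    {s : List ℕ} (hs : s.Sublist a) (hsort : s.Pairwise r) : s.length ≤ m := by
  by_contra h
  push_neg at h
  exact hno ⟨s.take (m+1), (List.take_sublist _ _).trans hs,
    by simp [List.length_take]; omega, hsort.sublist (List.take_sublist _ _)⟩

lemma gset_le {r : ℕ → ℕ → Prop} {a : List ℕ} {t m : ℕ}
    (hno : ¬ ∃ s : List ℕ, s.Sublist a ∧ s.length = m+1 ∧ s.Pairwise r) :
    ∀ n ∈ gset r a t, n ≤ m := by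
  rintro n ⟨s, hsub, rfl, -, hsort⟩
  exact length_le_of_no hno (hsub.trans (List.take_sublist t a)) hsort

lemma one_mem_gset {r : ℕ → ℕ → Prop} {a : List ℕ} {t : ℕ}
    (h1 : 1 ≤ t) (h2 : t - 1 < a.length) : 1 ∈ gset r a t := by
  have h2' : t - 1 < (a.take t).length := by
    simp only [List.length_take]; omega
  refine ⟨[(a.take t)[t-1]'h2'], List.singleton_sublist.mpr (List.getElem_mem _),
    rfl, ?_, List.pairwise_singleton _ _⟩
  rw [List.getLast?_singleton, List.getElem_take, List.getElem?_eq_getElem h2]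

lemma gset_sSup_lt {r : ℕ → ℕ → Prop} (htr : ∀ {x y z : ℕ}, r x y → r y z → r x z)
    {a : List ℕ} {t t' m : ℕ}
    (hno : ¬ ∃ s : List ℕ, s.Sublist a ∧ s.length = m+1 ∧ s.Pairwise r)
    (h1 : 1 ≤ t) (htt : t < t') (h2 : t' - 1 < a.length)
    (hrel : r (a[t-1]'(by omega)) (a[t'-1]'h2)) :
    sSup (gset r a t) < sSup (gset r a t') := by
  have h2t : t - 1 < a.length := by omega
  have hne : (gset r a t).Nonempty := ⟨1, one_mem_gset h1 h2t⟩
  have hbdd : BddAbove (gset r a t) := ⟨m, fun n hn => gset_le hno n hn⟩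
  obtain ⟨s, hsub, hlen, hlast, hsort⟩ := Nat.sSup_mem hne hbdd
  rw [List.getElem?_eq_getElem h2t] at hlast
  have hmem : sSup (gset r a t) + 1 ∈ gset r a t' := by
    refine ⟨s ++ [a[t'-1]'h2], ?_, by simp [hlen], ?_, ?_⟩
    · have e : a.take t' = a.take (t'-1) ++ [a[t'-1]'h2] := by
        conv_lhs => rw [show t' = (t'-1)+1 by omega]
        rw [List.take_succ, List.getElem?_eq_getElem h2]
        rfl
      rw [e]
      have : a.take t = (a.take (t'-1)).take t := by
        rw [List.take_take]
        congr 1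
        omega
      exact ((this ▸ hsub).trans (List.take_sublist _ _)).append (List.Sublist.refl _)
    · rw [List.getLast?_concat, List.getElem?_eq_getElem h2]
    · rw [List.pairwise_append]
      refine ⟨hsort, List.pairwise_singleton _ _, ?_⟩
      intro x hx y hy
      simp only [List.mem_singleton] at hy
      subst hy
      rcases sorted_rel_getLast hsort hx hlast with rfl | hxy
      · exact hrel
      · exact htr hxy hrel
  have hbdd' : BddAbove (gset r a t') := ⟨m, fun n hn => gset_le hno n hn⟩
  have := le_csSup hbdd' hmem
  omega

lemma grid_bounds {k ℓ : ℕ} {a : List ℕ} (hlen : a.length = k * ℓ)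
    (hinca : ¬ ∃ s : List ℕ, s.Sublist a ∧ s.length = k+1 ∧ s.Pairwise (· < ·))
    (hdeca : ¬ ∃ s : List ℕ, s.Sublist a ∧ s.length = ℓ+1 ∧ s.Pairwise (· > ·))
    {t : ℕ} (ht : t ∈ Finset.Icc 1 (k*ℓ)) :
    gridI a t ∈ Finset.Icc 1 ℓ ∧ gridJ a t ∈ Finset.Icc 1 k := by
  simp only [Finset.mem_Icc] at ht ⊢
  have h2 : t - 1 < a.length := by omega
  constructor
  · rw [gridI_eq]
    exact ⟨le_csSup ⟨ℓ, fun n hn => gset_le hdeca n hn⟩ (one_mem_gset ht.1 h2),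
      csSup_le ⟨1, one_mem_gset ht.1 h2⟩ (gset_le hdeca)⟩
  · rw [gridJ_eq]
    exact ⟨le_csSup ⟨k, fun n hn => gset_le hinca n hn⟩ (one_mem_gset ht.1 h2),
      csSup_le ⟨1, one_mem_gset ht.1 h2⟩ (gset_le hinca)⟩

lemma gamma_inj {k ℓ : ℕ} {a : List ℕ} (hlen : a.length = k * ℓ) (hnd : a.Nodup)
    (hinca : ¬ ∃ s : List ℕ, s.Sublist a ∧ s.length = k+1 ∧ s.Pairwise (· < ·))
    (hdeca : ¬ ∃ s : List ℕ, s.Sublist a ∧ s.length = ℓ+1 ∧ s.Pairwise (· > ·))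
    {t t' : ℕ} (ht : t ∈ Finset.Icc 1 (k*ℓ)) (ht' : t' ∈ Finset.Icc 1 (k*ℓ))
    (hI : gridI a t = gridI a t') (hJ : gridJ a t = gridJ a t') : t = t' := by
  simp only [Finset.mem_Icc] at ht ht'
  by_contra hne
  have key : ∀ u u' : ℕ, 1 ≤ u → u < u' → u' ≤ k * ℓ →
      gridI a u = gridI a u' → gridJ a u = gridJ a u' → False := by
    intro u u' hu1 huu hu2 hIe hJe
    have h2 : u' - 1 < a.length := by omega
    have h2u : u - 1 < a.length := by omega
    have hval : a[u-1]'h2u ≠ a[u'-1]'h2 := by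
      intro he
      have := (hnd.getElem_inj_iff).mp he
      omega
    rcases hval.lt_or_gt with hlt | hgt
    · have := gset_sSup_lt (r := (· < ·)) (fun hab hbc => lt_trans hab hbc)
        hinca hu1 huu h2 hlt
      rw [← gridJ_eq, ← gridJ_eq] at this
      omega
    · have := gset_sSup_lt (r := (· > ·)) (fun hab hbc => lt_trans hbc hab)
        hdeca hu1 huu h2 hgt
      rw [← gridI_eq, ← gridI_eq] at this
      omega
  rcases lt_or_gt_of_ne hne with h | h
  · exact key t t' ht.1 h ht'.2 hI hJ
  · exact key t' t ht'.1 h ht.2 hI.symm hJ.symm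

end PhiInj

theorem phi_injective (k ℓ : ℕ) (a b : List ℕ)
    (hperma : a.Perm (List.range' 1 (k*ℓ)))
    (hinca : ¬ ∃ s : List ℕ, s.Sublist a ∧ s.length = k+1 ∧ s.Pairwise (· < ·))
    (hdeca : ¬ ∃ s : List ℕ, s.Sublist a ∧ s.length = ℓ+1 ∧ s.Pairwise (· > ·))
    (hpermb : b.Perm (List.range' 1 (k*ℓ)))
    (hincb : ¬ ∃ s : List ℕ, s.Sublist b ∧ s.length = k+1 ∧ s.Pairwise (· < ·))
    (hdecb : ¬ ∃ s : List ℕ, s.Sublist b ∧ s.length = ℓ+1 ∧ s.Pairwise (· > ·))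
    (ra rb : ℕ → ℕ → ℕ)
    (hra : ∀ i ∈ Finset.Icc 1 ℓ, ∀ j ∈ Finset.Icc 1 k,
      ra i j ∈ Finset.Icc 1 (k*ℓ) ∧ gridI a (ra i j) = i ∧ gridJ a (ra i j) = j)
    (hrb : ∀ i ∈ Finset.Icc 1 ℓ, ∀ j ∈ Finset.Icc 1 k,
      rb i j ∈ Finset.Icc 1 (k*ℓ) ∧ gridI b (rb i j) = i ∧ gridJ b (rb i j) = j)
    (heq : ∀ i ∈ Finset.Icc 1 ℓ, ∀ j ∈ Finset.Icc 1 k,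
      ra i j = rb i j ∧
      a.getD (ra (ℓ+1-i) j - 1) 0 = b.getD (rb (ℓ+1-i) j - 1) 0) :
    a = b := by
  have hlena : a.length = k * ℓ := by simpa using hperma.length_eq
  have hlenb : b.length = k * ℓ := by simpa using hpermb.length_eq
  have hnda : a.Nodup := (hperma.nodup_iff).mpr ((List.nodup_range' (s := 1) (n := k*ℓ)))
  apply List.ext_getElem (by omega)
  intro n h1 h2
  set t := n + 1 with hT
  have htmem : t ∈ Finset.Icc 1 (k*ℓ) := by
    simp only [Finset.mem_Icc]; omega
  obtain ⟨hImem, hJmem⟩ := PhiInj.grid_bounds hlena hinca hdeca htmem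
  set i := gridI a t
  set j := gridJ a t
  obtain ⟨hrmem, hrI, hrJ⟩ := hra i hImem j hJmem
  have hteq : ra i j = t :=
    PhiInj.gamma_inj hlena hnda hinca hdeca hrmem htmem hrI hrJ
  simp only [Finset.mem_Icc] at hImem
  have hi'mem : ℓ + 1 - i ∈ Finset.Icc 1 ℓ := by
    simp only [Finset.mem_Icc]; omega
  obtain ⟨-, hval⟩ := heq (ℓ + 1 - i) hi'mem j hJmem
  have hii : ℓ + 1 - (ℓ + 1 - i) = i := by omega
  rw [hii] at hval
  obtain ⟨hrr, -⟩ := heq i (by simp only [Finset.mem_Icc]; omega) j hJmem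
  rw [← hrr, hteq] at hval
  have : t - 1 = n := by omega
  rw [this] at hval
  rwa [List.getD_eq_getElem a 0 h1, List.getD_eq_getElem b 0 (by omega)] at hval
end

section
/- Let R = (r_{ij}) and V = (v_{ij}) be ℓ×k standard Young tableaux (entries {1,...,kℓ}, rows and columns increasing), and define the sequence a = [a_1,...,a_{kℓ}] by a_t = v_{ij} iff t = r_{ℓ+1-i,j}. Then a is a permutation of {1,...,kℓ} with no increasing subsequence of length k+1 and no decreasing subsequence of length ℓ+1. -/
/-- `M`, restricted to `{1,…,ℓ} × {1,…,k}`, is a standard Young tableau of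
rectangular shape `ℓ × k`: its entries are exactly `{1,…,kℓ}` and every row
and every column is strictly increasing. -/
def IsSYT (ℓ k : ℕ) (M : ℕ → ℕ → ℕ) : Prop :=
  Set.BijOn (fun p : ℕ × ℕ => M p.1 p.2)
    (↑(Finset.Icc 1 ℓ ×ˢ Finset.Icc 1 k) : Set (ℕ × ℕ))
    (↑(Finset.Icc 1 (k*ℓ)) : Set ℕ) ∧
  (∀ i ∈ Finset.Icc 1 ℓ, ∀ j ∈ Finset.Icc 1 k, ∀ j' ∈ Finset.Icc 1 k,
    j < j' → M i j < M i j') ∧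
  (∀ i ∈ Finset.Icc 1 ℓ, ∀ i' ∈ Finset.Icc 1 ℓ, ∀ j ∈ Finset.Icc 1 k,
    i < i' → M i j < M i' j)

/-- Monotonicity of an SYT along the partial order on cells. -/
lemma syt_mono {ℓ k : ℕ} {M : ℕ → ℕ → ℕ} (h : IsSYT ℓ k M)
    {i i' j j' : ℕ} (hi : i ∈ Finset.Icc 1 ℓ) (hi' : i' ∈ Finset.Icc 1 ℓ)
    (hj : j ∈ Finset.Icc 1 k) (hj' : j' ∈ Finset.Icc 1 k)
    (hii : i ≤ i') (hjj : j ≤ j') (hne : ¬(i = i' ∧ j = j')) :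
    M i j < M i' j' := by
  obtain ⟨-, hrow, hcol⟩ := h
  rcases hii.lt_or_eq with h1 | rfl
  · rcases hjj.lt_or_eq with h2 | rfl
    · exact (hrow i hi j hj j' hj' h2).trans (hcol i hi i' hi' j' hj' h1)
    · exact hcol i hi i' hi' j hj h1
  · rcases hjj.lt_or_eq with h2 | rfl
    · exact hrow i hi j hj j' hj' h2
    · exact absurd ⟨rfl, rfl⟩ hne

theorem tableau_pair_gives_extremal (k ℓ : ℕ) (R V : ℕ → ℕ → ℕ)
    (hR : IsSYT ℓ k R) (hV : IsSYT ℓ k V)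
    (a : List ℕ) (ha : a.length = k*ℓ)
    (hdef : ∀ i ∈ Finset.Icc 1 ℓ, ∀ j ∈ Finset.Icc 1 k,
      a.getD (R (ℓ+1-i) j - 1) 0 = V i j) :
    a.Perm (List.range' 1 (k*ℓ)) ∧
    (¬ ∃ s : List ℕ, s.Sublist a ∧ s.length = k+1 ∧ s.Pairwise (· < ·)) ∧
    (¬ ∃ s : List ℕ, s.Sublist a ∧ s.length = ℓ+1 ∧ s.Pairwise (· > ·)) := by
  obtain ⟨⟨hRmaps, hRinj, hRsurj⟩, -, -⟩ := id hR
  obtain ⟨⟨hVmaps, hVinj, hVsurj⟩, -, -⟩ := id hV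
  -- description of entries of `a`
  have key : ∀ t, t < k*ℓ → ∃ i j, i ∈ Finset.Icc 1 ℓ ∧ j ∈ Finset.Icc 1 k ∧
      R (ℓ+1-i) j = t+1 ∧ a.getD t 0 = V i j := by
    intro t ht
    have htm : (t+1) ∈ (↑(Finset.Icc 1 (k*ℓ)) : Set ℕ) := by
      simp only [Finset.coe_Icc, Set.mem_Icc]; omega
    obtain ⟨p, hp, hpe⟩ := hRsurj htm
    simp only [Finset.coe_product, Set.mem_prod, Finset.mem_coe, Finset.mem_Icc] at hp
    obtain ⟨⟨hp11, hp12⟩, hp2⟩ := hp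
    have hfix : ℓ + 1 - (ℓ + 1 - p.1) = p.1 := by omega
    refine ⟨ℓ+1-p.1, p.2, by simp only [Finset.mem_Icc]; omega,
      by simp only [Finset.mem_Icc]; omega, by rw [hfix]; exact hpe, ?_⟩
    have := hdef (ℓ+1-p.1) (by simp only [Finset.mem_Icc]; omega) p.2
      (by simp only [Finset.mem_Icc]; omega)
    rw [hfix] at this
    have hpe' : R p.1 p.2 = t + 1 := hpe
    rw [hpe'] at this
    simpa using this
  -- values of `a` lie in `Icc 1 (k*ℓ)`
  have hmem : ∀ t, t < k*ℓ → a.getD t 0 ∈ Finset.Icc 1 (k*ℓ) := by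
    intro t ht
    obtain ⟨i, j, hi, hj, -, hv⟩ := key t ht
    rw [hv]
    have := hVmaps (show ((i,j) : ℕ × ℕ) ∈
        (↑(Finset.Icc 1 ℓ ×ˢ Finset.Icc 1 k) : Set (ℕ × ℕ)) by
      simp only [Finset.coe_product, Set.mem_prod, Finset.mem_coe]; exact ⟨hi, hj⟩)
    simpa using this
  -- injectivity of `t ↦ a.getD t 0` on `t < k*ℓ`
  have hinj : ∀ t t', t < k*ℓ → t' < k*ℓ → a.getD t 0 = a.getD t' 0 → t = t' := by
    intro t t' ht ht' he
    obtain ⟨i, j, hi, hj, hr, hv⟩ := key t ht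
    obtain ⟨i', j', hi', hj', hr', hv'⟩ := key t' ht'
    rw [hv, hv'] at he
    have hmemS : ∀ {x y : ℕ}, x ∈ Finset.Icc 1 ℓ → y ∈ Finset.Icc 1 k →
        ((x, y) : ℕ × ℕ) ∈ (↑(Finset.Icc 1 ℓ ×ˢ Finset.Icc 1 k) : Set (ℕ × ℕ)) := by
      intro x y hx hy
      simp only [Finset.coe_product, Set.mem_prod, Finset.mem_coe]; exact ⟨hx, hy⟩
    have := hVinj (hmemS hi hj) (hmemS hi' hj') he
    have hij : i = i' ∧ j = j' := by
      simpa [Prod.ext_iff] using this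
    rw [hij.1, hij.2] at hr
    omega
  -- Perm part
  have hmem' : ∀ x ∈ a, x ∈ Finset.Icc 1 (k*ℓ) := by
    intro x hx
    obtain ⟨t, ht, rfl⟩ := List.mem_iff_getElem.mp hx
    rw [← List.getD_eq_getElem a 0 ht]
    exact hmem t (ha ▸ ht)
  have hnodup : a.Nodup := by
    rw [List.nodup_iff_injective_get]
    intro t t' he
    have h1 : a.getD t.1 0 = a.getD t'.1 0 := by
      rw [List.getD_eq_getElem a 0 t.2, List.getD_eq_getElem a 0 t'.2]
      simpa using he
    exact Fin.ext (hinj t.1 t'.1 (ha ▸ t.2) (ha ▸ t'.2) h1)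
  have hsurj : ∀ m ∈ Finset.Icc 1 (k*ℓ), m ∈ a := by
    intro m hm
    obtain ⟨p, hp, hpe⟩ := hVsurj (show m ∈ (↑(Finset.Icc 1 (k*ℓ)) : Set ℕ) from hm)
    simp only [Finset.coe_product, Set.mem_prod, Finset.mem_coe, Finset.mem_Icc] at hp
    obtain ⟨⟨hp11, hp12⟩, ⟨hp21, hp22⟩⟩ := hp
    have hdef' := hdef p.1 (by simp only [Finset.mem_Icc]; omega) p.2
      (by simp only [Finset.mem_Icc]; omega)
    have hRm := hRmaps (show ((ℓ+1-p.1, p.2) : ℕ × ℕ) ∈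
        (↑(Finset.Icc 1 ℓ ×ˢ Finset.Icc 1 k) : Set (ℕ × ℕ)) by
      simp only [Finset.coe_product, Set.mem_prod, Finset.mem_coe, Finset.mem_Icc]
      omega)
    simp only [Finset.coe_Icc, Set.mem_Icc] at hRm
    have hlt : R (ℓ+1-p.1) p.2 - 1 < a.length := by omega
    have : a.getD (R (ℓ+1-p.1) p.2 - 1) 0 = m := by rw [hdef']; exact hpe
    rw [List.getD_eq_getElem a 0 hlt] at this
    exact this ▸ List.getElem_mem hlt
  have hperm : a.Perm (List.range' 1 (k*ℓ)) := by
    apply List.perm_of_nodup_nodup_toFinset_eq hnodup (List.nodup_range' (s := 1) (n := k*ℓ))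
    ext m
    simp only [List.mem_toFinset, List.mem_range'_1]
    constructor
    · intro hx
      have := hmem' m hx
      simp only [Finset.mem_Icc] at this
      omega
    · intro hx
      exact hsurj m (by simp only [Finset.mem_Icc]; omega)
  refine ⟨hperm, ?_, ?_⟩
  -- no increasing subsequence of length k+1
  · rintro ⟨s, hsub, hlen, hsort⟩
    obtain ⟨f, hf⟩ := List.sublist_iff_exists_fin_orderEmbedding_get_eq.mp hsub
    have hkey : ∀ m : Fin s.length, ∃ i j, i ∈ Finset.Icc 1 ℓ ∧ j ∈ Finset.Icc 1 k ∧
        R (ℓ+1-i) j = (f m : ℕ)+1 ∧ s.get m = V i j := by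
      intro m
      obtain ⟨i, j, hi, hj, hr, hv⟩ := key (f m) (ha ▸ (f m).2)
      exact ⟨i, j, hi, hj, hr, by rw [hf m, List.get_eq_getElem, ← List.getD_eq_getElem a 0 (f m).2]; exact hv⟩
    choose I J hI hJ hRIJ hVIJ using hkey
    -- columns strictly increase along the subsequence
    have hJmono : ∀ m m' : Fin s.length, m < m' → J m < J m' := by
      intro m m' hmm
      by_contra hle
      push_neg at hle
      have hvlt : V (I m) (J m) < V (I m') (J m') := by
        rw [← hVIJ m, ← hVIJ m']
        exact hsort.rel_get_of_lt hmm
      -- if J m' ≤ J m then I m < I m'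
      have hIlt : I m < I m' := by
        by_contra hIle
        push_neg at hIle
        rcases eq_or_ne (I m', J m') (I m, J m) with heq | hne
        · simp only [Prod.mk.injEq] at heq
          rw [heq.1, heq.2] at hvlt; omega
        · have := syt_mono hV (hI m') (hI m) (hJ m') (hJ m) hIle hle
            (by intro ⟨h1, h2⟩; exact hne (Prod.ext h1 h2))
          omega
      -- then R positions are reversed, contradiction
      have hImem := Finset.mem_Icc.mp (hI m); have hI'mem := Finset.mem_Icc.mp (hI m')
      have hrlt : R (ℓ+1-I m') (J m') < R (ℓ+1-I m) (J m) := by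
        apply syt_mono hR (by simp only [Finset.mem_Icc]; omega)
          (by simp only [Finset.mem_Icc]; omega) (hJ m') (hJ m) (by omega) hle
        intro ⟨h1, h2⟩; omega
      rw [hRIJ m, hRIJ m'] at hrlt
      have : (f m : ℕ) < (f m') := by
        have := f.strictMono hmm; exact this
      omega
    -- injectivity into a set of size k gives a contradiction
    have hcard : (Finset.univ : Finset (Fin s.length)).card ≤ (Finset.Icc 1 k).card := by
      apply Finset.card_le_card_of_injOn J
      · intro m _; exact hJ m
      · intro m _ m' _ he
        by_contra hne
        rcases lt_or_gt_of_ne (fun h : m = m' => hne h) with h | h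
        · exact absurd he (Nat.ne_of_lt (hJmono m m' h))
        · exact absurd he.symm (Nat.ne_of_lt (hJmono m' m h))
    simp only [Finset.card_univ, Fintype.card_fin, Nat.card_Icc, hlen] at hcard
    omega
  -- no decreasing subsequence of length ℓ+1
  · rintro ⟨s, hsub, hlen, hsort⟩
    obtain ⟨f, hf⟩ := List.sublist_iff_exists_fin_orderEmbedding_get_eq.mp hsub
    have hkey : ∀ m : Fin s.length, ∃ i j, i ∈ Finset.Icc 1 ℓ ∧ j ∈ Finset.Icc 1 k ∧
        R (ℓ+1-i) j = (f m : ℕ)+1 ∧ s.get m = V i j := by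
      intro m
      obtain ⟨i, j, hi, hj, hr, hv⟩ := key (f m) (ha ▸ (f m).2)
      exact ⟨i, j, hi, hj, hr, by rw [hf m, List.get_eq_getElem, ← List.getD_eq_getElem a 0 (f m).2]; exact hv⟩
    choose I J hI hJ hRIJ hVIJ using hkey
    -- rows strictly decrease along the subsequence
    have hImono : ∀ m m' : Fin s.length, m < m' → I m' < I m := by
      intro m m' hmm
      by_contra hle
      push_neg at hle
      have hvlt : V (I m') (J m') < V (I m) (J m) := by
        rw [← hVIJ m, ← hVIJ m']
        exact hsort.rel_get_of_lt hmm
      have hJlt : J m' < J m := by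
        by_contra hJle
        push_neg at hJle
        rcases eq_or_ne (I m, J m) (I m', J m') with heq | hne
        · simp only [Prod.mk.injEq] at heq
          rw [heq.1, heq.2] at hvlt; omega
        · have := syt_mono hV (hI m) (hI m') (hJ m) (hJ m') hle hJle
            (by intro ⟨h1, h2⟩; exact hne (Prod.ext h1 h2))
          omega
      have hImem := Finset.mem_Icc.mp (hI m); have hI'mem := Finset.mem_Icc.mp (hI m')
      have hrlt : R (ℓ+1-I m') (J m') < R (ℓ+1-I m) (J m) := by
        apply syt_mono hR (by simp only [Finset.mem_Icc]; omega)
          (by simp only [Finset.mem_Icc]; omega) (hJ m') (hJ m) (by omega) (by omega)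
        intro ⟨h1, h2⟩; omega
      rw [hRIJ m, hRIJ m'] at hrlt
      have : (f m : ℕ) < (f m') := f.strictMono hmm
      omega
    have hcard : (Finset.univ : Finset (Fin s.length)).card ≤ (Finset.Icc 1 ℓ).card := by
      apply Finset.card_le_card_of_injOn I
      · intro m _; exact hI m
      · intro m _ m' _ he
        by_contra hne
        rcases lt_or_gt_of_ne (fun h : m = m' => hne h) with h | h
        · exact absurd he.symm (Nat.ne_of_lt (hImono m m' h))
        · exact absurd he (Nat.ne_of_lt (hImono m' m h))
    simp only [Finset.card_univ, Fintype.card_fin, Nat.card_Icc, hlen] at hcard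
    omega
end
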